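/- arXiv:2403.18404 — 5 statements merged into one kernel-verified Lean document; each statement's English description precedes it below -/
import Mathlib

section
/- For every measurable orthogonal-pair-free set S ⊆ 𝕊² and every real ε > 0, there exists a set S' ∈ ℬ such that μ(S') > μ(S) − ε. Consequently sup{μ(S') : S' ∈ ℬ} = sup{μ(S) : S ⊆ 𝕊² measurable and orthogonal-pair-free}. -/
open Metric Set MeasureTheory Filter
open scoped ENNReal Topology

noncomputable section

abbrev E3 := EuclideanSpace ℝ (Fin 3)

/-- Real inner product on ℝ³. -/
def rinner (p q : E3) : ℝ := inner ℝ p q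

/-- The unit sphere 𝕊² in ℝ³. -/
def sphere2 : Set E3 := Metric.sphere (0 : E3) 1

def northPole : E3 := EuclideanSpace.single (2 : Fin 3) (1 : ℝ)
def southPole : E3 := EuclideanSpace.single (2 : Fin 3) (-1 : ℝ)

/-- Geodesic distance on the sphere: d(p,q) = arccos⟨p,q⟩. -/
def gdist (p q : E3) : ℝ := Real.arccos (rinner p q)

/-- Geodesic distance from a point to a set. -/
def gdistToSet (y : E3) (B : Set E3) : ℝ := sInf (gdist y '' B)

/-- Open geodesic cap/ball of radius r centered at p. -/
def cap (p : E3) (r : ℝ) : Set E3 := {q ∈ sphere2 | gdist p q < r}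

/-- A set is orthogonal-pair-free if no two distinct points of it are orthogonal. -/
def OPF (A : Set E3) : Prop :=
  ∀ p ∈ A, ∀ q ∈ A, p ≠ q → rinner p q ≠ 0

/-- The minor great-circle arc arc(x,y) = {u/‖u‖ : u ∈ [x,y]}. -/
def arc (x y : E3) : Set E3 := (fun u : E3 => ‖u‖⁻¹ • u) '' segment ℝ x y

/-- Spherical convexity. -/
def SphConvex (S : Set E3) : Prop :=
  ∀ x ∈ S, ∀ y ∈ S, x ≠ -y → arc x y ⊆ S

/-- The surface measure σ on 𝕊² (2-dimensional Hausdorff measure, σ(𝕊²) = 4π). -/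
def sigmaM : Measure E3 := MeasureTheory.Measure.hausdorffMeasure 2

/-- The normalized surface measure μ, μ(𝕊²) = 1. -/
def muS : Measure E3 := (ENNReal.ofReal (4 * Real.pi))⁻¹ • sigmaM

/-- 𝒜: orthogonal-pair-free subsets of 𝕊² that are finite unions of pairwise
mutually disjoint (disjoint closures) spherically convex sets. -/
def memA (S : Set E3) : Prop :=
  S ⊆ sphere2 ∧ OPF S ∧
  ∃ (n : ℕ) (C : Fin n → Set E3),
    (∀ i, C i ⊆ sphere2 ∧ SphConvex (C i)) ∧
    (Pairwise fun i j => closure (C i) ∩ closure (C j) = ∅) ∧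
    S = ⋃ i, C i

/-- 𝒜ₖ: as 𝒜 but with at most k convex pieces. -/
def memAk (k : ℕ) (S : Set E3) : Prop :=
  S ⊆ sphere2 ∧ OPF S ∧
  ∃ n : ℕ, n ≤ k ∧ ∃ C : Fin n → Set E3,
    (∀ i, C i ⊆ sphere2 ∧ SphConvex (C i)) ∧
    (Pairwise fun i j => closure (C i) ∩ closure (C j) = ∅) ∧
    S = ⋃ i, C i

/-- Azimuthal angle of the (p₁,p₂) components of a point. -/
def azimuth (p : E3) : ℝ := Complex.arg ((p 0 : ℂ) + (p 1 : ℂ) * Complex.I)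

/-- The azimuthal angle lies in [a,b] modulo 2π. -/
def azIn (p : E3) (a b : ℝ) : Prop :=
  ∃ m : ℤ, a ≤ azimuth p + 2 * Real.pi * (m : ℝ) ∧ azimuth p + 2 * Real.pi * (m : ℝ) ≤ b

/-- The level-k dyadic cell with indices i, j. -/
def dyadicCell (k i j : ℕ) : Set E3 :=
  {p ∈ sphere2 |
    ((i : ℝ) * (2 : ℝ)⁻¹ ^ k - 1 ≤ p 2 ∧ p 2 ≤ ((i : ℝ) + 1) * (2 : ℝ)⁻¹ ^ k - 1) ∧
    azIn p (Real.pi / 2 + (j : ℝ) * Real.pi * (2 : ℝ)⁻¹ ^ k)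
           (Real.pi / 2 + ((j : ℝ) + 1) * Real.pi * (2 : ℝ)⁻¹ ^ k)}

/-- c is a level-k dyadic cell. -/
def IsDyadicCell (k : ℕ) (c : Set E3) : Prop :=
  ∃ i j : ℕ, i < 2 ^ (k + 1) ∧ j < 2 ^ (k + 1) ∧ c = dyadicCell k i j

/-- Interior of c relative to 𝕊². -/
def relInterior (c : Set E3) : Set E3 :=
  {x ∈ sphere2 | ∃ U : Set E3, IsOpen U ∧ x ∈ U ∧ U ∩ sphere2 ⊆ c}

/-- Boundary of c relative to 𝕊². -/
def relBd (c : Set E3) : Set E3 := closure c ∩ closure (sphere2 \ c)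

/-- ℬ: orthogonal-pair-free finite unions of pairwise almost disjoint dyadic cells. -/
def memB (S : Set E3) : Prop :=
  OPF S ∧
  ∃ (n : ℕ) (lev : Fin n → ℕ) (c : Fin n → Set E3),
    (∀ i, IsDyadicCell (lev i) (c i)) ∧
    (Pairwise fun i j => relInterior (c i) ∩ relInterior (c j) = ∅) ∧
    S = ⋃ i, c i

/-- The great circle polar to y. -/
def polarGC (y : E3) : Set E3 := {z ∈ sphere2 | rinner y z = 0}

/-- G(M) = ⋃_{y ∈ M} G(y). -/
def GM (M : Set E3) : Set E3 := ⋃ y ∈ M, polarGC y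

/-- M₁ = {z ∈ 𝕊² : G(z) ⊆ G(M)}. -/
def Mone (M : Set E3) : Set E3 := {z ∈ sphere2 | polarGC z ⊆ GM M}

/-- M₂ = M₁ \ G(M). -/
def Mtwo (M : Set E3) : Set E3 := Mone M \ GM M

/-- x ∼ y: joined by a finite piecewise-geodesic path inside A. -/
def chainRel (A : Set E3) (x y : E3) : Prop :=
  ∃ (m : ℕ) (s : ℕ → E3), s 0 = x ∧ s m = y ∧
    ∀ l, l < m → s l ≠ -s (l + 1) ∧ arc (s l) (s (l + 1)) ⊆ A

/-- Hausdorff distance with respect to the geodesic metric. -/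
def geoHausdorff (U V : Set E3) : ℝ :=
  max (⨆ x ∈ U, gdistToSet x V) (⨆ y ∈ V, gdistToSet y U)

/-- Geodesic distance between two sets. -/
def gsetDist (A B : Set E3) : ℝ := sInf (Set.image2 gdist A B)



-- ===== Stage 1: basics =====
def cx (p : E3) : ℂ := (p 0 : ℂ) + (p 1 : ℂ) * Complex.I

lemma cx_re (p : E3) : (cx p).re = p 0 := by simp [cx]
lemma cx_im (p : E3) : (cx p).im = p 1 := by simp [cx]

lemma azimuth_eq (p : E3) : azimuth p = (cx p).arg := rfl

lemma abs_cx_sq (p : E3) : (‖(cx p)‖)^2 = p 0 ^ 2 + p 1 ^ 2 := by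
  rw [Complex.sq_norm, Complex.normSq_apply, cx_re, cx_im]; ring

lemma mem_sphere2 {p : E3} : p ∈ sphere2 ↔ ‖p‖ = 1 := by
  simp [sphere2, mem_sphere_iff_norm]

lemma sphere2_sum {p : E3} (hp : p ∈ sphere2) :
    p 0 ^ 2 + p 1 ^ 2 + p 2 ^ 2 = 1 := by
  rw [mem_sphere2] at hp
  have := EuclideanSpace.norm_eq p
  rw [hp] at this
  have h2 : Real.sqrt (∑ i : Fin 3, ‖p i‖ ^ 2) = 1 := this.symm
  rw [Real.sqrt_eq_one] at h2
  have h3 : ∑ i : Fin 3, ‖p i‖ ^ 2 = p 0 ^ 2 + p 1 ^ 2 + p 2 ^ 2 := by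
    rw [Fin.sum_univ_three]; simp [Real.norm_eq_abs, sq_abs]
  rw [← h3, h2]

lemma rinner_apply (p q : E3) : rinner p q = p 0 * q 0 + p 1 * q 1 + p 2 * q 2 := by
  simp only [rinner, PiLp.inner_apply, RCLike.inner_apply, Fin.sum_univ_three]
  simp [mul_comm]

lemma rinner_self {p : E3} (hp : p ∈ sphere2) : rinner p p = 1 := by
  rw [rinner_apply]
  have := sphere2_sum hp
  nlinarith [this]
-- generic subdivision
lemma subdiv {x step : ℝ} {N : ℕ} (hs : 0 < step) (h0 : 0 ≤ x) (h1 : x ≤ N * step)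
    (hN : 0 < N) : ∃ i : ℕ, i < N ∧ i * step ≤ x ∧ x ≤ (i + 1) * step := by
  rcases le_or_gt (⌊x / step⌋₊) (N - 1) with h | h
  · refine ⟨⌊x / step⌋₊, by omega, ?_, ?_⟩
    · have := Nat.floor_le (div_nonneg h0 hs.le)
      calc (⌊x / step⌋₊ : ℝ) * step ≤ (x / step) * step := by nlinarith
        _ = x := div_mul_cancel₀ x hs.ne'
    · have := Nat.lt_floor_add_one (x / step)
      have hx : x / step < ⌊x / step⌋₊ + 1 := this
      calc x = (x / step) * step := (div_mul_cancel₀ x hs.ne').symm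
        _ ≤ (⌊x / step⌋₊ + 1) * step := by nlinarith
  · -- floor ≥ N, so x ≥ N * step, combined with h1: x = N*step
    have hfl : (N : ℝ) ≤ x / step := by
      have : (N : ℝ) ≤ (⌊x / step⌋₊ : ℝ) := by exact_mod_cast by omega
      exact this.trans (Nat.floor_le (div_nonneg h0 hs.le))
    have hge : (N : ℝ) * step ≤ x := by
      calc (N:ℝ) * step ≤ (x / step) * step := by nlinarith
        _ = x := div_mul_cancel₀ x hs.ne'
    refine ⟨N - 1, by omega, ?_, ?_⟩
    · have : ((N - 1 : ℕ) : ℝ) ≤ (N : ℝ) := by exact_mod_cast Nat.sub_le N 1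
      nlinarith
    · have : ((N - 1 : ℕ) : ℝ) + 1 = (N : ℝ) := by
        have : (1 : ℕ) ≤ N := hN
        push_cast [Nat.cast_sub this]; ring
      rw [this]; linarith

lemma abs_coord_le {p : E3} (hp : p ∈ sphere2) : |p 2| ≤ 1 := by
  have := sphere2_sum hp
  nlinarith [sq_nonneg (p 0), sq_nonneg (p 1), sq_abs (p 2), abs_nonneg (p 2)]

lemma two_inv_pow_pos (k : ℕ) : (0:ℝ) < (2:ℝ)⁻¹ ^ k := by positivity

lemma cell_cover (k : ℕ) {p : E3} (hp : p ∈ sphere2) :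
    ∃ i j : ℕ, i < 2 ^ (k+1) ∧ j < 2 ^ (k+1) ∧ p ∈ dyadicCell k i j := by
  have hσ : (0:ℝ) < (2:ℝ)⁻¹ ^ k := two_inv_pow_pos k
  have hN : (0:ℕ) < 2 ^ (k+1) := Nat.pow_pos (by norm_num)
  have hNσ : ((2 ^ (k+1) : ℕ) : ℝ) * ((2:ℝ)⁻¹ ^ k) = 2 := by
    push_cast
    rw [pow_succ, inv_pow]
    field_simp
  -- z part
  have hz := abs_coord_le hp
  obtain ⟨i, hiN, hi1, hi2⟩ := subdiv (x := p 2 + 1) hσ (by obtain ⟨h1,h2⟩ := abs_le.1 hz; linarith)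
    (by rw [hNσ]; obtain ⟨h1,h2⟩ := abs_le.1 hz; linarith) hN
  -- azimuth part
  have harg : azimuth p ∈ Set.Ioc (-Real.pi) Real.pi := Complex.arg_mem_Ioc _
  set ψ := azimuth p with hψ
  have hπ := Real.pi_pos
  obtain ⟨ψ', m, hm, hlo, hhi⟩ :
      ∃ (ψ' : ℝ) (m : ℤ), ψ' = ψ + 2 * Real.pi * m ∧ Real.pi/2 ≤ ψ' ∧ ψ' < Real.pi/2 + 2*Real.pi := by
    rcases le_or_gt (Real.pi/2) ψ with h | h
    · exact ⟨ψ, 0, by push_cast; ring, h, by linarith [harg.2]⟩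
    · exact ⟨ψ + 2*Real.pi, 1, by push_cast; ring, by linarith [harg.1], by linarith⟩
  have hLN : ((2 ^ (k+1) : ℕ) : ℝ) * (Real.pi * (2:ℝ)⁻¹ ^ k) = 2 * Real.pi := by
    rw [show ((2 ^ (k+1) : ℕ) : ℝ) * (Real.pi * (2:ℝ)⁻¹ ^ k)
      = (((2 ^ (k+1) : ℕ) : ℝ) * ((2:ℝ)⁻¹ ^ k)) * Real.pi by ring, hNσ]; try ring
  obtain ⟨j, hjN, hj1, hj2⟩ := subdiv (x := ψ' - Real.pi/2) (step := Real.pi * (2:ℝ)⁻¹ ^ k)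
    (by positivity) (by linarith) (by rw [hLN]; linarith) hN
  refine ⟨i, j, hiN, hjN, hp, ⟨by linarith, by linarith⟩, ⟨m, ?_, ?_⟩⟩
  · rw [hψ] at hm; nlinarith [hm, hj1]
  · rw [hψ] at hm; nlinarith [hm, hj2]

-- ===== Stage: diameter =====
lemma abs_sub_le_sqrt_sq_sub {a b : ℝ} (ha : 0 ≤ a) (hb : 0 ≤ b) :
    |a - b| ≤ Real.sqrt |a^2 - b^2| := by
  have h1 : |a-b|^2 ≤ |a^2 - b^2| := by
    rw [← abs_pow]
    rcases le_total b a with h | h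
    · rw [abs_of_nonneg (by nlinarith : (0:ℝ) ≤ (a-b)^2), abs_of_nonneg (by nlinarith : (0:ℝ) ≤ a^2-b^2)]
      nlinarith
    · rw [abs_of_nonneg (by nlinarith : (0:ℝ) ≤ (a-b)^2), abs_of_nonpos (by nlinarith : a^2-b^2 ≤ 0)]
      nlinarith
  calc |a - b| = Real.sqrt (|a-b|^2) := by rw [Real.sqrt_sq (abs_nonneg _)]
    _ ≤ Real.sqrt |a^2-b^2| := Real.sqrt_le_sqrt h1

lemma cx_decomp (p : E3) :
    cx p = (‖(cx p)‖ : ℂ) * Complex.exp ((azimuth p : ℝ) * Complex.I) := by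
  rw [Complex.exp_mul_I, azimuth_eq]
  exact (Complex.norm_mul_cos_add_sin_mul_I (cx p)).symm

lemma exp_shift (ψ : ℝ) (m : ℤ) :
    Complex.exp (((ψ + 2 * Real.pi * m : ℝ)) * Complex.I) = Complex.exp ((ψ:ℝ) * Complex.I) := by
  push_cast
  rw [add_mul, Complex.exp_add]
  rw [show ((2:ℂ) * Real.pi * m) * Complex.I = m * (2 * Real.pi * Complex.I) by ring]
  rw [Complex.exp_int_mul_two_pi_mul_I]
  ring

lemma chord_le {a b : ℝ} (h : |a - b| ≤ 1) :
    ‖(Complex.exp ((a:ℝ) * Complex.I) - Complex.exp ((b:ℝ) * Complex.I))‖ ≤ 2 * |a - b| := by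
  have : Complex.exp ((a:ℝ)*Complex.I) - Complex.exp ((b:ℝ)*Complex.I)
      = Complex.exp ((b:ℝ)*Complex.I) * (Complex.exp (((a-b:ℝ))*Complex.I) - 1) := by
    rw [mul_sub, ← Complex.exp_add, mul_one]
    push_cast
    ring_nf
  rw [this, norm_mul, Complex.norm_exp_ofReal_mul_I, one_mul]
  have habs : ‖(((a-b:ℝ)) * Complex.I)‖ = |a - b| := by
    rw [norm_mul, Complex.norm_I, Complex.norm_real, Real.norm_eq_abs, mul_one]
  calc ‖(Complex.exp (((a-b:ℝ))*Complex.I) - 1)‖ ≤ 2 * ‖(((a-b:ℝ))*Complex.I)‖ :=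
        Complex.norm_exp_sub_one_le (by rw [habs]; exact h)
    _ = 2 * |a - b| := by rw [habs]

lemma norm_le_cx_add_z (p q : E3) :
    ‖p - q‖ ≤ ‖(cx p - cx q)‖ + |p 2 - q 2| := by
  have hA : (‖(cx p - cx q)‖)^2 = (p 0 - q 0)^2 + (p 1 - q 1)^2 := by
    rw [Complex.sq_norm, Complex.normSq_apply]
    simp [cx]
    ring
  have hnorm : ‖p - q‖ = Real.sqrt ((p 0 - q 0)^2 + (p 1 - q 1)^2 + (p 2 - q 2)^2) := by
    rw [EuclideanSpace.norm_eq, Fin.sum_univ_three]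
    congr 1 <;> simp [sq_abs]
  rw [hnorm]
  have hA0 : 0 ≤ ‖(cx p - cx q)‖ := norm_nonneg _
  calc Real.sqrt ((p 0 - q 0)^2 + (p 1 - q 1)^2 + (p 2 - q 2)^2)
      ≤ Real.sqrt ((‖(cx p - cx q)‖ + |p 2 - q 2|)^2) := by
        apply Real.sqrt_le_sqrt
        rw [add_sq, hA]
        nlinarith [abs_nonneg (p 2 - q 2), sq_abs (p 2 - q 2), hA0]
    _ = ‖(cx p - cx q)‖ + |p 2 - q 2| := by
        rw [Real.sqrt_sq (by positivity)]

set_option maxHeartbeats 1000000 in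
lemma cell_diam {k : ℕ} (hk : 2 ≤ k) {i j : ℕ} {p q : E3}
    (hp : p ∈ dyadicCell k i j) (hq : q ∈ dyadicCell k i j) :
    ‖p - q‖ ≤ 10 * Real.sqrt ((2:ℝ)⁻¹ ^ k) := by
  obtain ⟨hps, ⟨hpz1, hpz2⟩, mp, hpa1, hpa2⟩ := hp
  obtain ⟨hqs, ⟨hqz1, hqz2⟩, mq, hqa1, hqa2⟩ := hq
  set s : ℝ := (2:ℝ)⁻¹ ^ k with hs
  have hs0 : 0 < s := two_inv_pow_pos k
  have hs1 : s ≤ (2:ℝ)⁻¹^2 := by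
    rw [hs]
    exact pow_le_pow_of_le_one (by norm_num) (by norm_num) hk
  have hπ := Real.pi_pos
  have hπ4 : Real.pi ≤ 4 := by linarith [Real.pi_le_four]
  -- z bound
  have hzb : |p 2 - q 2| ≤ s := by
    rw [abs_le]; constructor <;> nlinarith
  -- radius bound
  have hrp : (‖(cx p)‖)^2 = 1 - p 2 ^2 := by
    rw [abs_cx_sq]; have := sphere2_sum hps; linarith
  have hrq : (‖(cx q)‖)^2 = 1 - q 2 ^2 := by
    rw [abs_cx_sq]; have := sphere2_sum hqs; linarith
  have hrb : |‖(cx p)‖ - ‖(cx q)‖| ≤ Real.sqrt (2*s) := by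
    calc |‖(cx p)‖ - ‖(cx q)‖|
        ≤ Real.sqrt |(‖(cx p)‖)^2 - (‖(cx q)‖)^2| :=
          abs_sub_le_sqrt_sq_sub (norm_nonneg _) (norm_nonneg _)
      _ ≤ Real.sqrt (2*s) := by
          apply Real.sqrt_le_sqrt
          rw [hrp, hrq]
          have h1 : |p 2| ≤ 1 := abs_coord_le hps
          have h2 : |q 2| ≤ 1 := abs_coord_le hqs
          rw [show (1 - p 2^2) - (1 - q 2^2) = (q 2 - p 2) * (q 2 + p 2) by ring, abs_mul]
          have : |q 2 - p 2| ≤ s := by rw [abs_sub_comm] at hzb; exact hzb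
          have h3 : |q 2 + p 2| ≤ 2 := by
            calc |q 2 + p 2| ≤ |q 2| + |p 2| := abs_add_le _ _
              _ ≤ 2 := by linarith
          nlinarith [abs_nonneg (q 2 - p 2)]
  -- azimuth bound
  set ψp := azimuth p + 2 * Real.pi * mp with hψp
  set ψq := azimuth q + 2 * Real.pi * mq with hψq
  have hexpand : ((j:ℝ)+1) * Real.pi * s = (j:ℝ) * Real.pi * s + Real.pi * s := by ring
  have hψb : |ψp - ψq| ≤ Real.pi * s := by
    rw [abs_le]
    constructor <;> linarith [hpa1, hpa2, hqa1, hqa2]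
  have hL1 : Real.pi * s ≤ 1 := by nlinarith
  -- chord
  have hexp : ‖(Complex.exp ((ψp:ℝ)*Complex.I) - Complex.exp ((ψq:ℝ)*Complex.I))‖
      ≤ 2 * (Real.pi * s) := by
    calc ‖_‖ ≤ 2 * |ψp - ψq| := chord_le (le_trans hψb hL1)
      _ ≤ 2 * (Real.pi * s) := by linarith
  -- decompose cx p - cx q
  have hdecomp : cx p - cx q
      = ((‖(cx p)‖ - ‖(cx q)‖ : ℝ)) * Complex.exp ((ψp:ℝ)*Complex.I)
        + (‖(cx q)‖ : ℝ) * (Complex.exp ((ψp:ℝ)*Complex.I) - Complex.exp ((ψq:ℝ)*Complex.I)) := by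
    have e1 : Complex.exp ((ψp:ℝ)*Complex.I) = Complex.exp ((azimuth p : ℝ)*Complex.I) := by
      rw [hψp]; exact exp_shift _ _
    have e2 : Complex.exp ((ψq:ℝ)*Complex.I) = Complex.exp ((azimuth q : ℝ)*Complex.I) := by
      rw [hψq]; exact exp_shift _ _
    conv_lhs => rw [cx_decomp p, cx_decomp q]
    rw [e1, e2]
    push_cast
    ring
  have hcxb : ‖(cx p - cx q)‖ ≤ Real.sqrt (2*s) + 2*(Real.pi*s) := by
    rw [hdecomp]
    calc ‖_‖ ≤ ‖(((‖(cx p)‖ - ‖(cx q)‖ : ℝ)) * Complex.exp ((ψp:ℝ)*Complex.I))‖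
          + ‖((‖(cx q)‖ : ℝ) * (Complex.exp ((ψp:ℝ)*Complex.I) - Complex.exp ((ψq:ℝ)*Complex.I)))‖ :=
        norm_add_le _ _
      _ ≤ Real.sqrt (2*s) + 2*(Real.pi*s) := by
        rw [norm_mul, norm_mul, Complex.norm_exp_ofReal_mul_I, mul_one, Complex.norm_real, Complex.norm_real, Real.norm_eq_abs, Real.norm_eq_abs]
        have h1 : |‖(cx q)‖| ≤ 1 := by
          rw [abs_of_nonneg (norm_nonneg _)]
          nlinarith [hrq, sq_abs (q 2), norm_nonneg (cx q)]
        have h2 : 0 ≤ ‖(Complex.exp ((ψp:ℝ)*Complex.I) - Complex.exp ((ψq:ℝ)*Complex.I))‖ := norm_nonneg _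
        nlinarith [hrb, hexp, abs_nonneg (‖(cx p)‖ - ‖(cx q)‖)]
  -- total
  have hss : s ≤ Real.sqrt s := by
    nlinarith [Real.sq_sqrt hs0.le, Real.sqrt_nonneg s, Real.sqrt_le_sqrt (show s ≤ 1 by nlinarith)]
  have h2s : Real.sqrt (2*s) ≤ 2 * Real.sqrt s := by
    rw [show (2:ℝ)*s = 2*s from rfl]
    calc Real.sqrt (2*s) ≤ Real.sqrt (4*s) := Real.sqrt_le_sqrt (by nlinarith)
      _ = 2 * Real.sqrt s := by
          rw [show (4:ℝ)*s = 2^2*s by ring, Real.sqrt_mul (by positivity), Real.sqrt_sq (by norm_num)]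
  calc ‖p - q‖ ≤ ‖(cx p - cx q)‖ + |p 2 - q 2| := norm_le_cx_add_z p q
    _ ≤ (Real.sqrt (2*s) + 2*(Real.pi*s)) + s := by linarith
    _ ≤ 10 * Real.sqrt s := by
        have hhalf : Real.sqrt s ≤ 1/2 := by
          calc Real.sqrt s ≤ Real.sqrt (2⁻¹^2) := Real.sqrt_le_sqrt hs1
            _ = 1/2 := by rw [show ((2:ℝ)⁻¹^2) = (1/2)^2 by norm_num, Real.sqrt_sq (by norm_num)]
        have hs_half : s ≤ Real.sqrt s / 2 := by nlinarith [Real.sq_sqrt hs0.le]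
        nlinarith [mul_le_mul_of_nonneg_right hπ4 hs0.le, hs_half, h2s, Real.sqrt_nonneg s]

-- ===== Stage: curve infrastructure =====
def curve (f g h : ℝ → ℝ) : ℝ → E3 := fun t =>
  f t • EuclideanSpace.single (0 : Fin 3) (1:ℝ) + g t • EuclideanSpace.single (1 : Fin 3) (1:ℝ)
    + h t • EuclideanSpace.single (2 : Fin 3) (1:ℝ)

lemma curve_apply0 (f g h : ℝ → ℝ) (t : ℝ) : curve f g h t 0 = f t := by
  simp [curve, EuclideanSpace.single_apply]
lemma curve_apply1 (f g h : ℝ → ℝ) (t : ℝ) : curve f g h t 1 = g t := by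
  simp [curve, EuclideanSpace.single_apply]
lemma curve_apply2 (f g h : ℝ → ℝ) (t : ℝ) : curve f g h t 2 = h t := by
  simp [curve, EuclideanSpace.single_apply]

lemma curve_continuous {f g h : ℝ → ℝ} (hf : Continuous f) (hg : Continuous g)
    (hh : Continuous h) : Continuous (curve f g h) := by
  unfold curve
  exact ((hf.smul continuous_const).add (hg.smul continuous_const)).add (hh.smul continuous_const)

lemma E3_ext {p q : E3} (h0 : p 0 = q 0) (h1 : p 1 = q 1) (h2 : p 2 = q 2) : p = q := by
  ext idx
  fin_cases idx <;> assumption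

lemma mem_sphere2_of_sum {p : E3} (h : p 0^2 + p 1^2 + p 2^2 = 1) : p ∈ sphere2 := by
  rw [mem_sphere2, EuclideanSpace.norm_eq, Fin.sum_univ_three]
  have : ‖p 0‖^2 + ‖p 1‖^2 + ‖p 2‖^2 = 1 := by simpa [Real.norm_eq_abs, sq_abs] using h
  rw [this, Real.sqrt_one]

lemma relInterior_sub {c : Set E3} : relInterior c ⊆ c := by
  rintro x ⟨hxs, U, hU, hxU, hUc⟩
  exact hUc ⟨hxU, hxs⟩

lemma arg_exp_shift (θ : ℝ) : ∃ m : ℤ, (Complex.exp ((θ:ℝ) * Complex.I)).arg = θ + 2*Real.pi*m := by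
  rw [Complex.arg_exp_mul_I]
  have h := toIocMod_sub_self (mul_pos two_pos Real.pi_pos) (-Real.pi) θ
  refine ⟨-(toIocDiv (mul_pos two_pos Real.pi_pos) (-Real.pi) θ), ?_⟩
  rw [zsmul_eq_mul] at h
  push_cast at h ⊢
  linarith [h]

-- ===== Stage: disjointness, z-case =====
set_option maxHeartbeats 1000000 in
lemma cells_disj_z {k i i' j j' : ℕ} (hii' : i < i') (hi' : i' < 2^(k+1)) :
    relInterior (dyadicCell k i j) ∩ relInterior (dyadicCell k i' j') = ∅ := by
  by_contra hne
  obtain ⟨x, ⟨hxs, U, hU, hxU, hUc⟩, ⟨-, U', hU', hxU', hUc'⟩⟩ :=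
    Set.nonempty_iff_ne_empty.2 hne
  set σ : ℝ := (2:ℝ)⁻¹ ^ k with hσdef
  have hσ : 0 < σ := two_inv_pow_pos k
  have hx1 : x ∈ dyadicCell k i j := hUc ⟨hxU, hxs⟩
  have hx2 : x ∈ dyadicCell k i' j' := hUc' ⟨hxU', hxs⟩
  obtain ⟨-, ⟨hz1, hz2⟩, -⟩ := hx1
  obtain ⟨-, ⟨hz1', hz2'⟩, -⟩ := hx2
  have hii1 : (i:ℝ) + 1 ≤ (i':ℝ) := by exact_mod_cast hii'
  have hxz : x 2 = ((i:ℝ)+1) * σ - 1 := by nlinarith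
  have hxz' : x 2 = (i':ℝ) * σ - 1 := by nlinarith
  -- x 2 strictly inside (-1,1)
  have hNσ : ((2 ^ (k+1) : ℕ) : ℝ) * σ = 2 := by
    rw [hσdef]; push_cast; rw [pow_succ, inv_pow]; field_simp
  have hi'R : (i':ℝ) ≤ ((2^(k+1) : ℕ) : ℝ) - 1 := by
    have : (i' : ℝ) + 1 ≤ ((2^(k+1):ℕ) : ℝ) := by exact_mod_cast hi'
    linarith
  have hxlt : x 2 < 1 := by nlinarith
  have hxgt : -1 < x 2 := by nlinarith
  -- radius
  set r : ℝ := Real.sqrt (1 - x 2 ^ 2) with hrdef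
  have hr2 : r^2 = 1 - x 2^2 := Real.sq_sqrt (by nlinarith)
  have hr : 0 < r := Real.sqrt_pos.2 (by nlinarith)
  have hsum := sphere2_sum hxs
  -- the curve
  set F : ℝ → E3 := curve
    (fun t => Real.cos t * x 0 - Real.sin t * (x 2 * x 0 / r))
    (fun t => Real.cos t * x 1 - Real.sin t * (x 2 * x 1 / r))
    (fun t => Real.cos t * x 2 + Real.sin t * r) with hF
  have hF0 : F 0 = x := by
    apply E3_ext <;> simp [hF, curve_apply0, curve_apply1, curve_apply2]
  have hFcont : Continuous F := by
    apply curve_continuous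
    · exact (Real.continuous_cos.mul continuous_const).sub (Real.continuous_sin.mul continuous_const)
    · exact (Real.continuous_cos.mul continuous_const).sub (Real.continuous_sin.mul continuous_const)
    · exact (Real.continuous_cos.mul continuous_const).add (Real.continuous_sin.mul continuous_const)
  have hFs : ∀ t, F t ∈ sphere2 := by
    intro t
    apply mem_sphere2_of_sum
    rw [hF, curve_apply0, curve_apply1, curve_apply2]
    have hsc := Real.sin_sq_add_cos_sq t
    have expand : (Real.cos t * x 0 - Real.sin t * (x 2 * x 0 / r))^2
        + (Real.cos t * x 1 - Real.sin t * (x 2 * x 1 / r))^2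
        + (Real.cos t * x 2 + Real.sin t * r)^2
        = (x 0^2 + x 1^2) * (Real.cos t - Real.sin t * x 2 / r)^2
          + (Real.cos t * x 2 + Real.sin t * r)^2 := by ring
    rw [expand]
    have hxy : x 0^2 + x 1^2 = r^2 := by nlinarith
    rw [hxy]
    have : r^2 * (Real.cos t - Real.sin t * x 2 / r)^2
        = (r * Real.cos t - Real.sin t * x 2)^2 := by
      field_simp
    rw [this]
    nlinarith
  -- membership of F t in W for small t
  have hWopen : IsOpen (U ∩ U') := hU.inter hU'
  have hxW : x ∈ U ∩ U' := ⟨hxU, hxU'⟩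
  have hnhds : (U ∩ U') ∈ nhds x := hWopen.mem_nhds hxW
  have hpre : F ⁻¹' (U ∩ U') ∈ nhds (0:ℝ) := by
    apply hFcont.continuousAt.preimage_mem_nhds
    rw [hF0]; exact hnhds
  obtain ⟨ε, hε, hball⟩ := Metric.mem_nhds_iff.1 hpre
  -- all points of (U ∩ U') ∩ sphere2 have third coordinate = x 2
  have hfix : ∀ y, y ∈ U ∩ U' → y ∈ sphere2 → y 2 = x 2 := by
    intro y hyW hys
    have hy1 : y ∈ dyadicCell k i j := hUc ⟨hyW.1, hys⟩
    have hy2 : y ∈ dyadicCell k i' j' := hUc' ⟨hyW.2, hys⟩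
    obtain ⟨-, ⟨-, hyz2⟩, -⟩ := hy1
    obtain ⟨-, ⟨hyz1', -⟩, -⟩ := hy2
    nlinarith
  -- choose t
  have hπ := Real.pi_pos
  have hπ3 := Real.pi_gt_three
  rcases le_or_gt (x 2) 0 with hx2sign | hx2sign
  · set t := min (ε/2) 1 with ht
    have ht0 : 0 < t := by positivity
    have ht1 : t ≤ 1 := min_le_right _ _
    have htε : |t| < ε := by
      rw [abs_of_pos ht0]
      calc t ≤ ε/2 := min_le_left _ _
        _ < ε := by linarith
    have hFtW : F t ∈ U ∩ U' := hball (by simpa [Real.dist_eq] using htε)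
    have h2 := hfix (F t) hFtW (hFs t)
    rw [hF, curve_apply2] at h2
    have hsin : 0 < Real.sin t := Real.sin_pos_of_pos_of_lt_pi ht0 (by linarith)
    have hcos : Real.cos t ≤ 1 := Real.cos_le_one t
    nlinarith
  · have hm0 : 0 < min (ε/2) 1 := by positivity
    set t := -(min (ε/2) 1) with ht
    have ht0 : t < 0 := by rw [ht]; exact neg_lt_zero.mpr hm0
    have ht1 : -1 ≤ t := by
      have := min_le_right (ε/2) 1
      rw [ht]; linarith
    have htε : |t| < ε := by
      rw [abs_of_neg ht0, ht, neg_neg]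
      calc min (ε/2) 1 ≤ ε/2 := min_le_left _ _
        _ < ε := by linarith
    have hFtW : F t ∈ U ∩ U' := hball (by simpa [Real.dist_eq] using htε)
    have h2 := hfix (F t) hFtW (hFs t)
    rw [hF, curve_apply2] at h2
    have hsin : Real.sin t < 0 := by
      have h1 : 0 < Real.sin (-t) := Real.sin_pos_of_pos_of_lt_pi (by linarith)
        (by rw [ht, neg_neg]; calc min (ε/2) 1 ≤ 1 := min_le_right _ _
              _ < Real.pi := by linarith)
      rw [Real.sin_neg] at h1; linarith
    have hcos : Real.cos t ≤ 1 := Real.cos_le_one t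
    nlinarith

-- ===== Stage: azimuth rotation helpers =====
lemma int_abs_lt_one {d : ℤ} (h : |(d:ℝ)| < 1) : d = 0 := by
  obtain ⟨h1, h2⟩ := abs_lt.1 h
  have h1' : (-1 : ℤ) < d := by exact_mod_cast h1
  have h2' : d < 1 := by exact_mod_cast h2
  omega

lemma azimuth_rot {x y : E3} (hx : cx x ≠ 0) (t : ℝ)
    (hy : cx y = Complex.exp ((t:ℝ) * Complex.I) * cx x) :
    ∃ m : ℤ, azimuth y = azimuth x + t + 2 * Real.pi * m := by
  have hexp : Complex.exp ((t:ℝ) * Complex.I) ≠ 0 := Complex.exp_ne_zero _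
  have hang : ((Complex.exp ((t:ℝ)*Complex.I) * cx x).arg : Real.Angle)
      = (((Complex.exp ((t:ℝ)*Complex.I)).arg + (cx x).arg : ℝ) : Real.Angle) := by
    rw [Complex.arg_mul_coe_angle hexp hx, Real.Angle.coe_add]
  obtain ⟨kk, hkk⟩ := Real.Angle.angle_eq_iff_two_pi_dvd_sub.1 hang
  obtain ⟨m0, hm0⟩ := arg_exp_shift t
  refine ⟨kk + m0, ?_⟩
  rw [azimuth_eq, hy]
  rw [azimuth_eq]
  push_cast
  nlinarith [hkk, hm0]

set_option maxHeartbeats 2000000 in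
lemma cells_disj_az {k i i' j j' : ℕ} (hjj' : j ≠ j') (hj : j < 2^(k+1)) (hj' : j' < 2^(k+1)) :
    relInterior (dyadicCell k i j) ∩ relInterior (dyadicCell k i' j') = ∅ := by
  by_contra hne
  obtain ⟨x, ⟨hxs, U, hU, hxU, hUc⟩, ⟨-, U', hU', hxU', hUc'⟩⟩ :=
    Set.nonempty_iff_ne_empty.2 hne
  set σ : ℝ := (2:ℝ)⁻¹ ^ k with hσdef
  have hσ : 0 < σ := two_inv_pow_pos k
  have hσ1 : σ ≤ 1 := by
    rw [hσdef]; exact pow_le_one₀ (by norm_num) (by norm_num)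
  have hπ := Real.pi_pos
  have hNσ : ((2 ^ (k+1) : ℕ) : ℝ) * σ = 2 := by
    rw [hσdef]; push_cast; rw [pow_succ, inv_pow]; field_simp
  have hx1 : x ∈ dyadicCell k i j := hUc ⟨hxU, hxs⟩
  have hx2 : x ∈ dyadicCell k i' j' := hUc' ⟨hxU', hxs⟩
  have hsum := sphere2_sum hxs
  have hWopen : IsOpen (U ∩ U') := hU.inter hU'
  have hxW : x ∈ U ∩ U' := ⟨hxU, hxU'⟩
  rcases eq_or_ne (cx x) 0 with hcx | hcx
  · -- pole case
    have hx0 : x 0 = 0 := by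
      have := congrArg Complex.re hcx; rwa [cx_re] at this
    have hx1' : x 1 = 0 := by
      have := congrArg Complex.im hcx; rwa [cx_im] at this
    have hx22 : x 2 ^ 2 = 1 := by nlinarith
    set φ0 : ℝ := (j:ℝ) * Real.pi * σ with hφ0
    set G : ℝ → E3 := curve (fun s => s * Real.cos φ0) (fun s => s * Real.sin φ0)
      (fun s => x 2 * Real.sqrt (1 - s^2)) with hG
    have hG0 : G 0 = x := by
      apply E3_ext <;> simp [hG, curve_apply0, curve_apply1, curve_apply2, hx0, hx1']
    have hGcont : Continuous G := by
      apply curve_continuous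
      · exact continuous_id.mul continuous_const
      · exact continuous_id.mul continuous_const
      · exact continuous_const.mul (Real.continuous_sqrt.comp
          (continuous_const.sub (continuous_pow 2)))
    have hpre : G ⁻¹' (U ∩ U') ∈ nhds (0:ℝ) := by
      apply hGcont.continuousAt.preimage_mem_nhds
      rw [hG0]; exact hWopen.mem_nhds hxW
    obtain ⟨ε, hε, hball⟩ := Metric.mem_nhds_iff.1 hpre
    set s0 : ℝ := min (ε/2) (1/2) with hs0def
    have hs0pos : 0 < s0 := by positivity
    have hs0half : s0 ≤ 1/2 := min_le_right _ _
    have hs0ε : |s0| < ε := by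
      rw [abs_of_pos hs0pos]
      calc s0 ≤ ε/2 := min_le_left _ _
        _ < ε := by linarith
    have hGW : G s0 ∈ U ∩ U' := hball (by simpa [Real.dist_eq] using hs0ε)
    have hGs : G s0 ∈ sphere2 := by
      apply mem_sphere2_of_sum
      rw [hG, curve_apply0, curve_apply1, curve_apply2]
      have h1 : Real.sqrt (1 - s0^2) ^ 2 = 1 - s0^2 := Real.sq_sqrt (by nlinarith)
      have hsc := Real.sin_sq_add_cos_sq φ0
      nlinarith [h1, hsc]
    have hGc : G s0 ∈ dyadicCell k i j := hUc ⟨hGW.1, hGs⟩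
    obtain ⟨-, -, m, hm1, hm2⟩ := hGc
    -- azimuth of G s0
    have hcxG : cx (G s0) = (s0 : ℂ) * Complex.exp ((φ0:ℝ) * Complex.I) := by
      rw [Complex.exp_mul_I]
      apply Complex.ext
      · simp [cx, hG, curve_apply0, curve_apply1, Complex.mul_re]
      · simp [cx, hG, curve_apply0, curve_apply1, Complex.mul_im]
    obtain ⟨m0, hm0⟩ := arg_exp_shift φ0
    have hazG : azimuth (G s0) = φ0 + 2*Real.pi*m0 := by
      rw [azimuth_eq, hcxG, Complex.arg_real_mul _ hs0pos, hm0]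
    rw [hazG] at hm1 hm2
    rw [← hσdef] at hm1 hm2
    rw [hφ0] at hm1 hm2
    -- contradiction: π/2 ≤ 2π(m0+m) ≤ π/2 + πσ
    set M : ℤ := m0 + m with hM
    have hlow : Real.pi/2 ≤ 2*Real.pi*(M:ℝ) := by push_cast [hM]; linarith [hm1]
    have hhigh : 2*Real.pi*(M:ℝ) ≤ Real.pi/2 + Real.pi*σ := by
      push_cast [hM]
      have hexpand : ((j:ℝ)+1) * Real.pi * σ = (j:ℝ) * Real.pi * σ + Real.pi * σ := by ring
      linarith [hm2]
    rcases le_or_gt 1 M with hM1 | hM1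
    · have : (1:ℝ) ≤ (M:ℝ) := by exact_mod_cast hM1
      nlinarith
    · have : (M:ℝ) ≤ 0 := by exact_mod_cast (by omega : M ≤ 0)
      nlinarith
  · -- non-pole case: rotate
    set F : ℝ → E3 := curve (fun t => Real.cos t * x 0 - Real.sin t * x 1)
      (fun t => Real.sin t * x 0 + Real.cos t * x 1) (fun _ => x 2) with hF
    have hF0 : F 0 = x := by
      apply E3_ext <;> simp [hF, curve_apply0, curve_apply1, curve_apply2]
    have hFcont : Continuous F := by
      apply curve_continuous
      · exact (Real.continuous_cos.mul continuous_const).sub (Real.continuous_sin.mul continuous_const)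
      · exact (Real.continuous_sin.mul continuous_const).add (Real.continuous_cos.mul continuous_const)
      · exact continuous_const
    have hFs : ∀ t, F t ∈ sphere2 := by
      intro t
      apply mem_sphere2_of_sum
      rw [hF, curve_apply0, curve_apply1, curve_apply2]
      have hsc := Real.sin_sq_add_cos_sq t
      nlinarith [hsc]
    have hcxF : ∀ t, cx (F t) = Complex.exp ((t:ℝ) * Complex.I) * cx x := by
      intro t
      rw [Complex.exp_mul_I]
      apply Complex.ext
      · simp [cx, hF, curve_apply0, curve_apply1, Complex.mul_re, Complex.mul_im]
        try ring
      · simp [cx, hF, curve_apply0, curve_apply1, Complex.mul_re, Complex.mul_im]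
        try ring
    have hpre : F ⁻¹' (U ∩ U') ∈ nhds (0:ℝ) := by
      apply hFcont.continuousAt.preimage_mem_nhds
      rw [hF0]; exact hWopen.mem_nhds hxW
    obtain ⟨ε, hε, hball⟩ := Metric.mem_nhds_iff.1 hpre
    set t0 : ℝ := min (ε/2) (Real.pi * σ / 2) with ht0def
    have ht0pos : 0 < t0 := by positivity
    have ht0L : t0 ≤ Real.pi * σ / 2 := min_le_right _ _
    have ht0ε : |t0| < ε := by
      rw [abs_of_pos ht0pos]
      calc t0 ≤ ε/2 := min_le_left _ _
        _ < ε := by linarith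
    have hFW : F t0 ∈ U ∩ U' := hball (by simpa [Real.dist_eq] using ht0ε)
    obtain ⟨mr, hmr⟩ := azimuth_rot hcx t0 (hcxF t0)
    have hFc1 : F t0 ∈ dyadicCell k i j := hUc ⟨hFW.1, hFs t0⟩
    have hFc2 : F t0 ∈ dyadicCell k i' j' := hUc' ⟨hFW.2, hFs t0⟩
    obtain ⟨-, -, m1, hA1, hA2⟩ := hx1
    obtain ⟨-, -, m2, hB1, hB2⟩ := hx2
    obtain ⟨-, -, m3, hC1, hC2⟩ := hFc1
    obtain ⟨-, -, m4, hD1, hD2⟩ := hFc2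
    rw [hmr] at hC1 hC2 hD1 hD2
    rw [← hσdef] at hA1 hA2 hB1 hB2 hC1 hC2 hD1 hD2
    set ψ := azimuth x
    -- M3 := mr + m3 equals m1 ; M4 := mr + m4 equals m2
    have hM3 : mr + m3 = m1 := by
      have habs : |2*Real.pi*((mr:ℝ) + m3 - m1)| < 2*Real.pi := by
        rw [abs_lt]
        constructor <;> push_cast <;> nlinarith [hA1, hA2, hC1, hC2]
      have hz : mr + m3 - m1 = 0 := by
        apply int_abs_lt_one
        have h2 : |2*Real.pi| * |((mr + m3 - m1 : ℤ):ℝ)| < 2*Real.pi := by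
          rw [← abs_mul]; push_cast; push_cast at habs; convert habs using 2; try ring
        rw [abs_of_pos (by positivity : (0:ℝ) < 2*Real.pi)] at h2
        nlinarith [abs_nonneg (((mr + m3 - m1 : ℤ):ℝ))]
      omega
    have hM4 : mr + m4 = m2 := by
      have habs : |2*Real.pi*((mr:ℝ) + m4 - m2)| < 2*Real.pi := by
        rw [abs_lt]
        constructor <;> push_cast <;> nlinarith [hB1, hB2, hD1, hD2]
      have hz : mr + m4 - m2 = 0 := by
        apply int_abs_lt_one
        have h2 : |2*Real.pi| * |((mr + m4 - m2 : ℤ):ℝ)| < 2*Real.pi := by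
          rw [← abs_mul]; push_cast; push_cast at habs; convert habs using 2; try ring
        rw [abs_of_pos (by positivity : (0:ℝ) < 2*Real.pi)] at h2
        nlinarith [abs_nonneg (((mr + m4 - m2 : ℤ):ℝ))]
      omega
    -- now the four inequalities with m1, m2
    have hC2' : ψ + t0 + 2*Real.pi*(m1:ℝ) ≤ Real.pi/2 + ((j:ℝ)+1)*Real.pi*σ := by
      have hcast : ((mr:ℝ) + m3) = (m1:ℝ) := by exact_mod_cast hM3
      have hrw : 2*Real.pi*(m1:ℝ) = 2*Real.pi*(mr:ℝ) + 2*Real.pi*(m3:ℝ) := by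
        rw [← hcast]; ring
      linarith [hC2, hrw]
    have hD2' : ψ + t0 + 2*Real.pi*(m2:ℝ) ≤ Real.pi/2 + ((j':ℝ)+1)*Real.pi*σ := by
      have hcast : ((mr:ℝ) + m4) = (m2:ℝ) := by exact_mod_cast hM4
      have hrw : 2*Real.pi*(m2:ℝ) = 2*Real.pi*(mr:ℝ) + 2*Real.pi*(m4:ℝ) := by
        rw [← hcast]; ring
      linarith [hD2, hrw]
    -- |2π(m1-m2) - (j-j')πσ| ≤ L - t0 < L
    set DR : ℝ := ((2^(k+1) : ℕ):ℝ) * ((m1:ℝ) - m2) - ((j:ℝ) - j') with hDR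
    have h2π : 2*Real.pi = Real.pi * σ * ((2^(k+1) : ℕ):ℝ) := by
      rw [show Real.pi * σ * ((2^(k+1) : ℕ):ℝ) = (((2^(k+1) : ℕ):ℝ) * σ) * Real.pi by ring, hNσ]
      try ring
    have hexp1 : Real.pi * σ * DR
        = 2*Real.pi*(m1:ℝ) - 2*Real.pi*(m2:ℝ) - (j:ℝ)*(Real.pi*σ) + (j':ℝ)*(Real.pi*σ) := by
      rw [hDR]
      linear_combination ((m2:ℝ) - (m1:ℝ)) * h2π
    have hexpj : ((j:ℝ)+1) * Real.pi * σ = (j:ℝ) * Real.pi * σ + Real.pi * σ := by ring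
    have hexpj' : ((j':ℝ)+1) * Real.pi * σ = (j':ℝ) * Real.pi * σ + Real.pi * σ := by ring
    have hmul : ∀ a : ℝ, a * (Real.pi * σ) = a * Real.pi * σ := by intro a; ring
    have hkey : |Real.pi * σ * DR| < Real.pi * σ := by
      rw [abs_lt]
      constructor
      · rw [hexp1, hmul, hmul]
        linarith [hA1, hD2', hexpj']
      · rw [hexp1, hmul, hmul]
        linarith [hB1, hC2', hexpj]
    have hDR1 : |DR| < 1 := by
      rw [abs_mul, abs_of_pos (by positivity : (0:ℝ) < Real.pi * σ)] at hkey
      nlinarith [abs_nonneg DR]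
    have hDint : ((2^(k+1) : ℤ) * (m1 - m2) - ((j:ℤ) - j') : ℤ) = 0 := by
      apply int_abs_lt_one
      have : (((2^(k+1) : ℤ) * (m1 - m2) - ((j:ℤ) - j') : ℤ) : ℝ) = DR := by
        rw [hDR]; push_cast; ring
      rwa [this]
    -- integer contradiction
    have hjZ : (j:ℤ) < 2^(k+1) := by exact_mod_cast hj
    have hj'Z : (j':ℤ) < 2^(k+1) := by exact_mod_cast hj'
    have hjne : (j:ℤ) ≠ (j':ℤ) := by exact_mod_cast hjj'
    have hP : (0:ℤ) < 2^(k+1) := by positivity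
    have hPQ : (j:ℤ) - j' = 2^(k+1) * (m1 - m2) := by linarith [hDint]
    have hj0 : (0:ℤ) ≤ (j:ℤ) := Int.ofNat_nonneg j
    have hj'0 : (0:ℤ) ≤ (j':ℤ) := Int.ofNat_nonneg j'
    rcases lt_trichotomy (m1 - m2) 0 with hm | hm | hm
    · have h1 : m1 - m2 ≤ -1 := by omega
      have h2 : (2:ℤ)^(k+1) * (m1 - m2) ≤ 2^(k+1) * (-1) :=
        mul_le_mul_of_nonneg_left h1 hP.le
      omega
    · rw [hm, mul_zero] at hPQ; omega
    · have h1 : (1:ℤ) ≤ m1 - m2 := by omega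
      have h2 : (2:ℤ)^(k+1) * 1 ≤ 2^(k+1) * (m1 - m2) :=
        mul_le_mul_of_nonneg_left h1 hP.le
      omega

-- ===== Stage: combined disjointness, measurability =====
lemma cells_disj {k i j i' j' : ℕ} (h : (i,j) ≠ (i',j'))
    (hi : i < 2^(k+1)) (hi' : i' < 2^(k+1)) (hj : j < 2^(k+1)) (hj' : j' < 2^(k+1)) :
    relInterior (dyadicCell k i j) ∩ relInterior (dyadicCell k i' j') = ∅ := by
  rcases eq_or_ne j j' with hjj | hjj
  · subst hjj
    have hii : i ≠ i' := by
      intro hii; exact h (by rw [hii])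
    rcases hii.lt_or_gt with hlt | hlt
    · exact cells_disj_z hlt hi'
    · rw [Set.inter_comm]; exact cells_disj_z hlt hi
  · exact cells_disj_az hjj hj hj'

lemma continuous_cx : Continuous cx := by
  unfold cx
  have h0 : Continuous fun p : E3 => p 0 := by
    exact (EuclideanSpace.proj (0 : Fin 3) : E3 →L[ℝ] ℝ).continuous
  have h1 : Continuous fun p : E3 => p 1 := by
    exact (EuclideanSpace.proj (1 : Fin 3) : E3 →L[ℝ] ℝ).continuous
  exact (Complex.continuous_ofReal.comp h0).add
    ((Complex.continuous_ofReal.comp h1).mul continuous_const)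

lemma continuous_coord2 : Continuous fun p : E3 => p 2 :=
  (EuclideanSpace.proj (2 : Fin 3) : E3 →L[ℝ] ℝ).continuous

lemma measurable_azimuth : Measurable azimuth :=
  Complex.measurable_arg.comp continuous_cx.measurable

lemma measurableSet_sphere2 : MeasurableSet sphere2 :=
  (isClosed_sphere).measurableSet

lemma measurableSet_dyadicCell (k i j : ℕ) : MeasurableSet (dyadicCell k i j) := by
  have : dyadicCell k i j = sphere2 ∩
      ({p : E3 | (i : ℝ) * (2:ℝ)⁻¹ ^ k - 1 ≤ p 2 ∧ p 2 ≤ ((i:ℝ)+1) * (2:ℝ)⁻¹ ^ k - 1} ∩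
       ⋃ m : ℤ, {p : E3 | Real.pi/2 + (j:ℝ)*Real.pi*(2:ℝ)⁻¹^k ≤ azimuth p + 2*Real.pi*m ∧
          azimuth p + 2*Real.pi*m ≤ Real.pi/2 + ((j:ℝ)+1)*Real.pi*(2:ℝ)⁻¹^k}) := by
    ext p
    simp only [dyadicCell, azIn, Set.mem_inter_iff, Set.mem_setOf_eq, Set.mem_iUnion]
    try tauto
  rw [this]
  apply measurableSet_sphere2.inter
  apply MeasurableSet.inter
  · exact (measurableSet_le measurable_const continuous_coord2.measurable).inter
      (measurableSet_le continuous_coord2.measurable measurable_const)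
  · apply MeasurableSet.iUnion
    intro m
    exact (measurableSet_le measurable_const (measurable_azimuth.add_const _)).inter
      (measurableSet_le (measurable_azimuth.add_const _) measurable_const)

lemma dyadicCell_subset_sphere (k i j : ℕ) : dyadicCell k i j ⊆ sphere2 :=
  fun _ hp => hp.1

-- inner product perturbation estimate
lemma rinner_perturb {p q p₀ q₀ : E3} (hq : q ∈ sphere2) (hp₀ : p₀ ∈ sphere2) :
    |rinner p q - rinner p₀ q₀| ≤ ‖p - p₀‖ + ‖q - q₀‖ := by
  have hqn : ‖q‖ = 1 := mem_sphere2.1 hq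
  have hp₀n : ‖p₀‖ = 1 := mem_sphere2.1 hp₀
  have hdecomp : rinner p q - rinner p₀ q₀ = (inner ℝ (p - p₀) q : ℝ) + (inner ℝ p₀ (q - q₀) : ℝ) := by
    simp only [rinner, inner_sub_left, inner_sub_right]
    ring
  rw [hdecomp]
  calc |(inner ℝ (p - p₀) q : ℝ) + (inner ℝ p₀ (q - q₀) : ℝ)|
      ≤ |(inner ℝ (p - p₀) q : ℝ)| + |(inner ℝ p₀ (q - q₀) : ℝ)| := abs_add_le _ _
    _ ≤ ‖p - p₀‖ * ‖q‖ + ‖p₀‖ * ‖q - q₀‖ :=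
        add_le_add (abs_real_inner_le_norm _ _) (abs_real_inner_le_norm _ _)
    _ = ‖p - p₀‖ + ‖q - q₀‖ := by rw [hqn, hp₀n]; ring

-- ===== Stage: main construction =====
set_option maxHeartbeats 1000000 in
lemma approx_compact (K : Set E3) (hK : IsCompact K) (hKs : K ⊆ sphere2) (hopf : OPF K) :
    ∃ S' : Set E3, memB S' ∧ K ⊆ S' ∧ MeasurableSet S' ∧ S' ⊆ sphere2 := by
  classical
  -- uniform lower bound on |⟨p,q⟩| over K × K
  obtain ⟨δ, hδpos, hδ1, hδ⟩ : ∃ δ, 0 < δ ∧ δ ≤ 1 ∧ ∀ p ∈ K, ∀ q ∈ K, δ ≤ |rinner p q| := by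
    rcases K.eq_empty_or_nonempty with hKe | hKne
    · exact ⟨1, one_pos, le_refl 1, by simp [hKe]⟩
    · have hf : Continuous fun z : E3 × E3 => |rinner z.1 z.2| := by
        have : Continuous fun z : E3 × E3 => (inner ℝ z.1 z.2 : ℝ) := continuous_inner
        exact this.abs
      obtain ⟨z0, hz0mem, hz0min⟩ := (hK.prod hK).exists_isMinOn (hKne.prod hKne)
        hf.continuousOn
      refine ⟨min (|rinner z0.1 z0.2|) 1, ?_, min_le_right _ _, ?_⟩
      · apply lt_min _ one_pos
        rw [abs_pos]
        intro h0
        have hne : z0.1 ≠ z0.2 := by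
          intro he
          rw [he] at h0
          rw [rinner_self (hKs hz0mem.2)] at h0
          norm_num at h0
        exact hopf z0.1 hz0mem.1 z0.2 hz0mem.2 hne h0
      · intro p hp q hq
        exact le_trans (min_le_left _ _) (isMinOn_iff.1 hz0min (p, q) ⟨hp, hq⟩)
  -- choose level k
  obtain ⟨k0, hk0⟩ : ∃ k0 : ℕ, ((2:ℝ)⁻¹)^k0 < (δ/21)^2 := by
    apply exists_pow_lt_of_lt_one (by positivity)
    norm_num
  set k := max k0 2 with hkdef
  have hk2 : 2 ≤ k := le_max_right _ _
  have hkle : ((2:ℝ)⁻¹)^k ≤ ((2:ℝ)⁻¹)^k0 :=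
    pow_le_pow_of_le_one (by norm_num) (by norm_num) (le_max_left _ _)
  have hsq : Real.sqrt ((2:ℝ)⁻¹^k) < δ/21 := by
    have h1 : ((2:ℝ)⁻¹)^k < (δ/21)^2 := lt_of_le_of_lt hkle hk0
    calc Real.sqrt ((2:ℝ)⁻¹^k) < Real.sqrt ((δ/21)^2) := by
          apply (Real.sqrt_lt_sqrt (by positivity) h1)
      _ = δ/21 := Real.sqrt_sq (by positivity)
  set D : ℝ := 10 * Real.sqrt ((2:ℝ)⁻¹^k) with hD
  have hDδ : 2 * D < δ := by
    rw [hD]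
    nlinarith [hsq, hδpos]
  have hD0 : 0 ≤ D := by positivity
  -- the finite family of cells meeting K
  set A : Finset (ℕ × ℕ) := (Finset.range (2^(k+1)) ×ˢ Finset.range (2^(k+1))).filter
    (fun ij => (dyadicCell k ij.1 ij.2 ∩ K).Nonempty) with hA
  set n := A.card with hn
  set e := A.equivFin with he
  set c : Fin n → Set E3 := fun a => dyadicCell k (e.symm a).1.1 (e.symm a).1.2 with hc
  have hAmem : ∀ ij : ℕ × ℕ, ij ∈ A ↔
      ((ij.1 < 2^(k+1) ∧ ij.2 < 2^(k+1)) ∧ (dyadicCell k ij.1 ij.2 ∩ K).Nonempty) := by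
    intro ij
    rw [hA, Finset.mem_filter, Finset.mem_product, Finset.mem_range, Finset.mem_range]
  have hcmem : ∀ a : Fin n, ((e.symm a).1.1, (e.symm a).1.2) ∈ A := by
    intro a
    have h := (e.symm a).2
    have heta : ((e.symm a).1.1, (e.symm a).1.2) = (e.symm a).1 := rfl
    rw [heta]
    exact h
  have hbounds : ∀ a : Fin n, (e.symm a).1.1 < 2^(k+1) ∧ (e.symm a).1.2 < 2^(k+1) := by
    intro a
    exact ((hAmem _).1 (hcmem a)).1
  have hnonemp : ∀ a : Fin n, (dyadicCell k (e.symm a).1.1 (e.symm a).1.2 ∩ K).Nonempty := by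
    intro a
    exact ((hAmem _).1 (hcmem a)).2
  refine ⟨⋃ a, c a, ⟨?_, n, (fun _ => k), c, ?_, ?_, rfl⟩, ?_, ?_, ?_⟩
  · -- OPF
    intro p hp q hq hne
    obtain ⟨_, ⟨a, rfl⟩, hpa⟩ := hp
    obtain ⟨_, ⟨b, rfl⟩, hqb⟩ := hq
    obtain ⟨p₀, hp₀c, hp₀K⟩ := hnonemp a
    obtain ⟨q₀, hq₀c, hq₀K⟩ := hnonemp b
    have h1 : ‖p - p₀‖ ≤ D := cell_diam hk2 hpa hp₀c
    have h2 : ‖q - q₀‖ ≤ D := cell_diam hk2 hqb hq₀c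
    have h3 : |rinner p q - rinner p₀ q₀| ≤ ‖p - p₀‖ + ‖q - q₀‖ :=
      rinner_perturb (dyadicCell_subset_sphere _ _ _ hqb) (hKs hp₀K)
    have h4 : δ ≤ |rinner p₀ q₀| := hδ p₀ hp₀K q₀ hq₀K
    intro h0
    rw [h0] at h3
    have : |rinner p₀ q₀| ≤ ‖p - p₀‖ + ‖q - q₀‖ := by
      rw [abs_sub_comm] at h3
      simpa using h3
    linarith [h1, h2, h4, hDδ, this]
  · -- dyadic cells
    intro a
    exact ⟨(e.symm a).1.1, (e.symm a).1.2, (hbounds a).1, (hbounds a).2, rfl⟩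
  · -- pairwise disjoint interiors
    intro a b hab
    apply cells_disj
    · intro hcontra
      apply hab
      have hinj : (e.symm a).1 = (e.symm b).1 := by
        have h1 : ((e.symm a).1.1, (e.symm a).1.2) = (e.symm a).1 := rfl
        have h2 : ((e.symm b).1.1, (e.symm b).1.2) = (e.symm b).1 := rfl
        rw [← h1, ← h2]
        exact hcontra
      have : e.symm a = e.symm b := Subtype.ext hinj
      exact e.symm.injective this
    · exact (hbounds a).1
    · exact (hbounds b).1
    · exact (hbounds a).2
    · exact (hbounds b).2
  · -- K ⊆ S'
    intro x hx
    obtain ⟨i, j, hi, hj, hcell⟩ := cell_cover k (hKs hx)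
    have hmem : (i, j) ∈ A := (hAmem (i,j)).2 ⟨⟨hi, hj⟩, ⟨x, hcell, hx⟩⟩
    refine Set.mem_iUnion.2 ⟨e ⟨(i,j), hmem⟩, ?_⟩
    rw [hc]
    simp only [Equiv.symm_apply_apply]
    exact hcell
  · exact MeasurableSet.iUnion (fun a => measurableSet_dyadicCell _ _ _)
  · exact Set.iUnion_subset (fun a => dyadicCell_subset_sphere _ _ _)

-- ===== Stage: trig Lipschitz helpers =====
lemma abs_sin_le_abs (x : ℝ) : |Real.sin x| ≤ |x| := by
  have key : ∀ y : ℝ, 0 ≤ y → |Real.sin y| ≤ y := by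
    intro y hy
    rcases le_total y 1 with h1 | h1
    · rw [abs_of_nonneg (Real.sin_nonneg_of_nonneg_of_le_pi hy
        (by linarith [Real.pi_gt_three]))]
      exact Real.sin_le hy
    · calc |Real.sin y| ≤ 1 := Real.abs_sin_le_one y
        _ ≤ y := h1
  rcases le_total 0 x with hx | hx
  · rw [abs_of_nonneg hx]; exact key x hx
  · rw [abs_of_nonpos hx]
    have := key (-x) (by linarith)
    rwa [Real.sin_neg, abs_neg] at this

lemma abs_cos_sub_cos (a b : ℝ) : |Real.cos a - Real.cos b| ≤ |a - b| := by
  rw [Real.cos_sub_cos]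
  rw [abs_mul, abs_mul]
  calc |(-2 : ℝ)| * |Real.sin ((a+b)/2)| * |Real.sin ((a-b)/2)|
      ≤ 2 * 1 * |(a-b)/2| := by
        have h1 := Real.abs_sin_le_one ((a+b)/2)
        have h2 := abs_sin_le_abs ((a-b)/2)
        have h3 := abs_nonneg (Real.sin ((a-b)/2))
        have h4 := abs_nonneg ((a-b)/2)
        rw [abs_of_nonpos (by norm_num : (-2:ℝ) ≤ 0), neg_neg]
        nlinarith
    _ = |a - b| := by rw [abs_div]; simp; ring

lemma abs_sin_sub_sin (a b : ℝ) : |Real.sin a - Real.sin b| ≤ |a - b| := by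
  rw [Real.sin_sub_sin]
  rw [abs_mul, abs_mul]
  calc |(2 : ℝ)| * |Real.sin ((a-b)/2)| * |Real.cos ((a+b)/2)|
      ≤ 2 * |(a-b)/2| * 1 := by
        have h1 := Real.abs_cos_le_one ((a+b)/2)
        have h2 := abs_sin_le_abs ((a-b)/2)
        have h3 := abs_nonneg (Real.sin ((a-b)/2))
        have h4 := abs_nonneg ((a-b)/2)
        rw [abs_of_nonneg (by norm_num : (0:ℝ) ≤ 2)]
        nlinarith
    _ = |a - b| := by rw [abs_div]; simp; ring

lemma norm_le_sum_abs (p : E3) : ‖p‖ ≤ |p 0| + |p 1| + |p 2| := by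
  rw [EuclideanSpace.norm_eq, Fin.sum_univ_three]
  have h : ‖p 0‖^2 + ‖p 1‖^2 + ‖p 2‖^2 = |p 0|^2 + |p 1|^2 + |p 2|^2 := by
    simp [Real.norm_eq_abs]
  calc Real.sqrt (‖p 0‖^2 + ‖p 1‖^2 + ‖p 2‖^2)
      ≤ Real.sqrt ((|p 0| + |p 1| + |p 2|)^2) := by
        apply Real.sqrt_le_sqrt
        rw [h]
        nlinarith [abs_nonneg (p 0), abs_nonneg (p 1), abs_nonneg (p 2), sq_abs (p 0)]
    _ = |p 0| + |p 1| + |p 2| := Real.sqrt_sq (by positivity)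

-- spherical parametrization
def sph (v : Fin 2 → ℝ) : E3 :=
  (Real.cos (v 0) * Real.cos (v 1)) • EuclideanSpace.single (0 : Fin 3) (1:ℝ)
    + (Real.cos (v 0) * Real.sin (v 1)) • EuclideanSpace.single (1 : Fin 3) (1:ℝ)
    + (Real.sin (v 0)) • EuclideanSpace.single (2 : Fin 3) (1:ℝ)

lemma sph_apply0 (v : Fin 2 → ℝ) : sph v 0 = Real.cos (v 0) * Real.cos (v 1) := by
  simp [sph, EuclideanSpace.single_apply]
lemma sph_apply1 (v : Fin 2 → ℝ) : sph v 1 = Real.cos (v 0) * Real.sin (v 1) := by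
  simp [sph, EuclideanSpace.single_apply]
lemma sph_apply2 (v : Fin 2 → ℝ) : sph v 2 = Real.sin (v 0) := by
  simp [sph, EuclideanSpace.single_apply]

lemma sph_lipschitz : LipschitzWith 6 sph := by
  apply LipschitzWith.of_dist_le_mul
  intro u v
  have hd0 : |u 0 - v 0| ≤ dist u v := by
    rw [← Real.dist_eq]; exact dist_le_pi_dist u v 0
  have hd1 : |u 1 - v 1| ≤ dist u v := by
    rw [← Real.dist_eq]; exact dist_le_pi_dist u v 1
  have hdn : dist (sph u) (sph v) = ‖sph u - sph v‖ := dist_eq_norm _ _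
  rw [hdn]
  have c0 : (sph u - sph v) 0 = sph u 0 - sph v 0 := rfl
  have c1 : (sph u - sph v) 1 = sph u 1 - sph v 1 := rfl
  have c2 : (sph u - sph v) 2 = sph u 2 - sph v 2 := rfl
  calc ‖sph u - sph v‖ ≤ |(sph u - sph v) 0| + |(sph u - sph v) 1| + |(sph u - sph v) 2| :=
        norm_le_sum_abs _
    _ ≤ 2 * dist u v + 2 * dist u v + 2 * dist u v := by
        rw [c0, c1, c2, sph_apply0, sph_apply0, sph_apply1, sph_apply1, sph_apply2, sph_apply2]
        have e0 : |Real.cos (u 0) * Real.cos (u 1) - Real.cos (v 0) * Real.cos (v 1)|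
            ≤ |u 0 - v 0| + |u 1 - v 1| := by
          have hsplit : Real.cos (u 0) * Real.cos (u 1) - Real.cos (v 0) * Real.cos (v 1)
              = (Real.cos (u 0) - Real.cos (v 0)) * Real.cos (u 1)
                + Real.cos (v 0) * (Real.cos (u 1) - Real.cos (v 1)) := by ring
          rw [hsplit]
          calc |_| ≤ |(Real.cos (u 0) - Real.cos (v 0)) * Real.cos (u 1)|
                + |Real.cos (v 0) * (Real.cos (u 1) - Real.cos (v 1))| := abs_add_le _ _
            _ ≤ |u 0 - v 0| + |u 1 - v 1| := by
                rw [abs_mul, abs_mul]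
                have := abs_cos_sub_cos (u 0) (v 0)
                have := abs_cos_sub_cos (u 1) (v 1)
                have := Real.abs_cos_le_one (u 1)
                have := Real.abs_cos_le_one (v 0)
                have := abs_nonneg (Real.cos (u 0) - Real.cos (v 0))
                have := abs_nonneg (Real.cos (u 1) - Real.cos (v 1))
                nlinarith
        have e1 : |Real.cos (u 0) * Real.sin (u 1) - Real.cos (v 0) * Real.sin (v 1)|
            ≤ |u 0 - v 0| + |u 1 - v 1| := by
          have hsplit : Real.cos (u 0) * Real.sin (u 1) - Real.cos (v 0) * Real.sin (v 1)
              = (Real.cos (u 0) - Real.cos (v 0)) * Real.sin (u 1)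
                + Real.cos (v 0) * (Real.sin (u 1) - Real.sin (v 1)) := by ring
          rw [hsplit]
          calc |_| ≤ |(Real.cos (u 0) - Real.cos (v 0)) * Real.sin (u 1)|
                + |Real.cos (v 0) * (Real.sin (u 1) - Real.sin (v 1))| := abs_add_le _ _
            _ ≤ |u 0 - v 0| + |u 1 - v 1| := by
                rw [abs_mul, abs_mul]
                have := abs_cos_sub_cos (u 0) (v 0)
                have := abs_sin_sub_sin (u 1) (v 1)
                have := Real.abs_sin_le_one (u 1)
                have := Real.abs_cos_le_one (v 0)
                have := abs_nonneg (Real.cos (u 0) - Real.cos (v 0))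
                have := abs_nonneg (Real.sin (u 1) - Real.sin (v 1))
                nlinarith
        have e2 : |Real.sin (u 0) - Real.sin (v 0)| ≤ |u 0 - v 0| := abs_sin_sub_sin _ _
        linarith [dist_nonneg (x := u) (y := v)]
    _ = 6 * dist u v := by ring
  
lemma sphere2_subset_sph_image :
    sphere2 ⊆ sph '' (Metric.closedBall (0 : Fin 2 → ℝ) Real.pi) := by
  intro p hp
  have hsum := sphere2_sum hp
  have hz := abs_coord_le hp
  obtain ⟨hz1, hz2⟩ := abs_le.1 hz
  set θ := Real.arcsin (p 2) with hθ
  set φ := azimuth p with hφ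
  have harg := Complex.arg_mem_Ioc (cx p)
  have hπ := Real.pi_pos
  refine ⟨![θ, φ], ?_, ?_⟩
  · rw [Metric.mem_closedBall]
    rw [dist_pi_le_iff hπ.le, Fin.forall_fin_two]
    simp only [Matrix.cons_val_zero, Matrix.cons_val_one, Matrix.head_cons, Pi.zero_apply,
      Real.dist_eq, sub_zero]
    have hargφ : -Real.pi < φ ∧ φ ≤ Real.pi := by
      rw [hφ, azimuth_eq]; exact ⟨harg.1, harg.2⟩
    constructor
    · rw [abs_le]
      constructor
      · linarith [Real.neg_pi_div_two_le_arcsin (p 2)]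
      · linarith [Real.arcsin_le_pi_div_two (p 2)]
    · rw [abs_le]
      exact ⟨by linarith [hargφ.1], hargφ.2⟩
  · -- sph ![θ, φ] = p
    have hcosθ : Real.cos θ = Real.sqrt (1 - p 2 ^ 2) := Real.cos_arcsin _
    have hsinθ : Real.sin θ = p 2 := Real.sin_arcsin hz1 hz2
    have hr : ‖(cx p)‖ = Real.sqrt (1 - p 2 ^2) := by
      rw [show (1 : ℝ) - p 2^2 = (‖(cx p)‖)^2 by rw [abs_cx_sq]; linarith]
      rw [Real.sqrt_sq (norm_nonneg _)]
    have hdec := cx_decomp p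
    have hp0 : p 0 = ‖(cx p)‖ * Real.cos φ := by
      have := congrArg Complex.re hdec
      rw [cx_re] at this
      rw [this]
      simp [Complex.exp_ofReal_mul_I_re, hφ]
    have hp1 : p 1 = ‖(cx p)‖ * Real.sin φ := by
      have := congrArg Complex.im hdec
      rw [cx_im] at this
      rw [this]
      simp [Complex.exp_ofReal_mul_I_im, hφ]
    apply E3_ext
    · rw [sph_apply0]
      simp only [Matrix.cons_val_zero, Matrix.cons_val_one, Matrix.head_cons]
      rw [hcosθ, ← hr, ← hp0]
    · rw [sph_apply1]
      simp only [Matrix.cons_val_zero, Matrix.cons_val_one, Matrix.head_cons]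
      rw [hcosθ, ← hr, ← hp1]
    · rw [sph_apply2]
      simp only [Matrix.cons_val_zero]
      rw [hsinθ]

lemma hausdorff_pi2 : (MeasureTheory.Measure.hausdorffMeasure (2:ℝ) : Measure (Fin 2 → ℝ)) = volume := by
  have := hausdorffMeasure_pi_real (ι := Fin 2)
  simpa using this

lemma sigmaM_sphere2_lt_top : sigmaM sphere2 < ⊤ := by
  have h1 : sigmaM sphere2 ≤ sigmaM (sph '' (Metric.closedBall (0 : Fin 2 → ℝ) Real.pi)) :=
    measure_mono sphere2_subset_sph_image
  have h2 : sigmaM (sph '' (Metric.closedBall (0 : Fin 2 → ℝ) Real.pi))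
      ≤ (6 : ℝ≥0∞) ^ (2:ℝ) * MeasureTheory.Measure.hausdorffMeasure (2:ℝ)
          (Metric.closedBall (0 : Fin 2 → ℝ) Real.pi) := by
    have := sph_lipschitz.hausdorffMeasure_image_le (by norm_num : (0:ℝ) ≤ 2)
      (Metric.closedBall (0 : Fin 2 → ℝ) Real.pi)
    simpa [sigmaM] using this
  have h3 : MeasureTheory.Measure.hausdorffMeasure (2:ℝ)
      (Metric.closedBall (0 : Fin 2 → ℝ) Real.pi) < ⊤ := by
    rw [hausdorff_pi2]
    exact (isCompact_closedBall _ _).measure_lt_top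
  calc sigmaM sphere2 ≤ _ := h1
    _ ≤ _ := h2
    _ < ⊤ := ENNReal.mul_lt_top (by
        apply ENNReal.rpow_lt_top_of_nonneg (by norm_num)
        norm_num) h3

lemma muS_sphere2_lt_top : muS sphere2 < ⊤ := by
  rw [muS, Measure.smul_apply, smul_eq_mul]
  apply ENNReal.mul_lt_top _ sigmaM_sphere2_lt_top
  apply ENNReal.inv_lt_top.2
  apply ENNReal.ofReal_pos.2
  positivity

-- ===== Stage: the positive-measure OPF cell =====
def projPi (p : E3) : Fin 2 → ℝ := ![p 0, p 1]

lemma abs_coord_le_norm (x : E3) (idx : Fin 3) : |x idx| ≤ ‖x‖ := by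
  rw [EuclideanSpace.norm_eq]
  have h1 : |x idx| = Real.sqrt (‖x idx‖^2) := by
    rw [Real.sqrt_sq (norm_nonneg _), Real.norm_eq_abs]
  rw [h1]
  apply Real.sqrt_le_sqrt
  exact Finset.single_le_sum (f := fun l => ‖x l‖^2) (fun l _ => by positivity)
    (Finset.mem_univ idx)

lemma projPi_lipschitz : LipschitzWith 1 projPi := by
  apply LipschitzWith.of_dist_le_mul
  intro p q
  rw [NNReal.coe_one, one_mul, dist_pi_le_iff dist_nonneg, Fin.forall_fin_two]
  have habs : ∀ idx : Fin 3, dist (p idx) (q idx) ≤ dist p q := by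
    intro idx
    rw [Real.dist_eq, dist_eq_norm]
    have hc : p idx - q idx = (p - q) idx := rfl
    rw [hc]
    exact abs_coord_le_norm _ _
  constructor
  · simpa [projPi] using habs 0
  · simpa [projPi] using habs 1

def goodCell : Set E3 := dyadicCell 2 7 0

lemma goodCell_facts {p : E3} (hp : p ∈ goodCell) :
    p ∈ sphere2 ∧ 3/4 ≤ p 2 ∧ p 0^2 + p 1^2 ≤ 7/16 := by
  obtain ⟨hps, ⟨hz1, hz2⟩, -⟩ := hp
  have hsum := sphere2_sum hps
  have h34 : (3:ℝ)/4 ≤ p 2 := by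
    have : ((7:ℕ):ℝ) * (2:ℝ)⁻¹^2 - 1 = 3/4 := by norm_num
    rw [this] at hz1; exact hz1
  refine ⟨hps, h34, by nlinarith⟩

lemma goodCell_OPF : OPF goodCell := by
  intro p hp q hq _
  obtain ⟨-, hp2, hpr⟩ := goodCell_facts hp
  obtain ⟨-, hq2, hqr⟩ := goodCell_facts hq
  rw [rinner_apply]
  have hcs : (p 0 * q 0 + p 1 * q 1)^2 ≤ (p 0^2 + p 1^2) * (q 0^2 + q 1^2) := by
    nlinarith [sq_nonneg (p 0 * q 1 - p 1 * q 0)]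
  intro h0
  have h9 : (9:ℝ)/16 ≤ p 2 * q 2 := by nlinarith
  have hA : p 0 * q 0 + p 1 * q 1 ≤ -(9/16) := by linarith
  have hA2 : (81:ℝ)/256 ≤ (p 0 * q 0 + p 1 * q 1)^2 := by nlinarith
  have hprod : (p 0^2 + p 1^2) * (q 0^2 + q 1^2) ≤ 7/16 * (7/16) :=
    mul_le_mul hpr hqr (by positivity) (by norm_num)
  nlinarith [hcs, hA2, hprod]

lemma goodCell_pos : 0 < sigmaM goodCell := by
  classical
  set W : Set (Fin 2 → ℝ) := {v | (v 0)^2 + (v 1)^2 < (1/4:ℝ)^2 ∧ 0 < v 1 ∧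
      Real.pi/2 < Complex.arg ((v 0 : ℂ) + (v 1 : ℂ) * Complex.I) ∧
      Complex.arg ((v 0 : ℂ) + (v 1 : ℂ) * Complex.I) < Real.pi/2 + Real.pi * (2:ℝ)⁻¹^2 } with hW
  have hπ := Real.pi_pos
  -- W is open
  have hWopen : IsOpen W := by
    rw [isOpen_iff_mem_nhds]
    intro w hw
    obtain ⟨hw1, hw2, hw3, hw4⟩ := hw
    have hcont1 : Continuous fun v : Fin 2 → ℝ => (v 0)^2 + (v 1)^2 :=
      ((continuous_apply 0).pow 2).add ((continuous_apply 1).pow 2)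
    have hcont2 : Continuous fun v : Fin 2 → ℝ => v 1 := continuous_apply 1
    have hcxc : Continuous fun v : Fin 2 → ℝ => ((v 0 : ℂ) + (v 1 : ℂ) * Complex.I) :=
      (Complex.continuous_ofReal.comp (continuous_apply 0)).add
        ((Complex.continuous_ofReal.comp (continuous_apply 1)).mul continuous_const)
    have hargc : ContinuousAt (fun v : Fin 2 → ℝ =>
        Complex.arg ((v 0 : ℂ) + (v 1 : ℂ) * Complex.I)) w := by
      have hslit : ((w 0 : ℂ) + (w 1 : ℂ) * Complex.I) ∈ Complex.slitPlane := by
        apply Complex.mem_slitPlane_iff.2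
        right
        simpa using hw2.ne'
      have hcomp := ContinuousAt.comp (x := w)
        (f := fun v : Fin 2 → ℝ => ((v 0 : ℂ) + (v 1 : ℂ) * Complex.I))
        (g := Complex.arg) (Complex.continuousAt_arg hslit) hcxc.continuousAt
      exact hcomp
    have m1 : {v : Fin 2 → ℝ | (v 0)^2 + (v 1)^2 < (1/4:ℝ)^2} ∈ nhds w :=
      (isOpen_lt hcont1 continuous_const).mem_nhds hw1
    have m2 : {v : Fin 2 → ℝ | 0 < v 1} ∈ nhds w :=
      (isOpen_lt continuous_const hcont2).mem_nhds hw2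
    have m3 : {v : Fin 2 → ℝ | Real.pi/2 < Complex.arg ((v 0 : ℂ) + (v 1 : ℂ) * Complex.I) ∧
        Complex.arg ((v 0 : ℂ) + (v 1 : ℂ) * Complex.I) < Real.pi/2 + Real.pi * (2:ℝ)⁻¹^2} ∈ nhds w := by
      have : Set.Ioo (Real.pi/2) (Real.pi/2 + Real.pi * (2:ℝ)⁻¹^2) ∈
          nhds (Complex.arg ((w 0 : ℂ) + (w 1 : ℂ) * Complex.I)) :=
        Ioo_mem_nhds hw3 hw4
      exact hargc.preimage_mem_nhds this
    filter_upwards [m1, m2, m3] with v h1 h2 h3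
    exact ⟨h1, h2, h3.1, h3.2⟩
  -- W is nonempty
  have hWne : W.Nonempty := by
    set φ : ℝ := 2 * Real.pi / 3 with hφ
    have hφIoc : φ ∈ Set.Ioc (-Real.pi) Real.pi := ⟨by linarith, by linarith⟩
    have hsinφ : 0 < Real.sin φ := Real.sin_pos_of_pos_of_lt_pi (by linarith) (by linarith)
    refine ⟨![Real.cos φ / 8, Real.sin φ / 8], ?_, ?_, ?_, ?_⟩
    · simp only [Matrix.cons_val_zero, Matrix.cons_val_one, Matrix.head_cons, Set.mem_setOf_eq]
      nlinarith [Real.sin_sq_add_cos_sq φ]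
    · simpa using by positivity
    · have hrw : ((Real.cos φ / 8 : ℝ) : ℂ) + ((Real.sin φ / 8 : ℝ) : ℂ) * Complex.I
          = ((1/8 : ℝ) : ℂ) * (Real.cos φ + Real.sin φ * Complex.I) := by
        push_cast; ring
      simp only [Matrix.cons_val_zero, Matrix.cons_val_one, Matrix.head_cons]
      rw [hrw, Complex.arg_real_mul _ (by norm_num : (0:ℝ) < 1/8)]
      rw [show (Real.cos φ : ℂ) + (Real.sin φ : ℂ) * Complex.I
        = Complex.cos φ + Complex.sin φ * Complex.I by
          rw [Complex.ofReal_cos, Complex.ofReal_sin]]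
      rw [Complex.arg_cos_add_sin_mul_I hφIoc]
      rw [hφ]; linarith
    · have hrw : ((Real.cos φ / 8 : ℝ) : ℂ) + ((Real.sin φ / 8 : ℝ) : ℂ) * Complex.I
          = ((1/8 : ℝ) : ℂ) * (Real.cos φ + Real.sin φ * Complex.I) := by
        push_cast; ring
      simp only [Matrix.cons_val_zero, Matrix.cons_val_one, Matrix.head_cons]
      rw [hrw, Complex.arg_real_mul _ (by norm_num : (0:ℝ) < 1/8)]
      rw [show (Real.cos φ : ℂ) + (Real.sin φ : ℂ) * Complex.I
        = Complex.cos φ + Complex.sin φ * Complex.I by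
          rw [Complex.ofReal_cos, Complex.ofReal_sin]]
      rw [Complex.arg_cos_add_sin_mul_I hφIoc]
      rw [hφ]
      nlinarith
  -- W ⊆ projPi '' goodCell
  have hWsub : W ⊆ projPi '' goodCell := by
    rintro v ⟨hv1, hv2, hv3, hv4⟩
    set h : ℝ := 1 - (v 0)^2 - (v 1)^2 with hh
    have hh916 : 9/16 ≤ h := by rw [hh]; nlinarith
    have hh1 : h ≤ 1 := by rw [hh]; nlinarith [sq_nonneg (v 0), sq_nonneg (v 1)]
    set p : E3 := (v 0) • EuclideanSpace.single (0 : Fin 3) (1:ℝ)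
      + (v 1) • EuclideanSpace.single (1 : Fin 3) (1:ℝ)
      + (Real.sqrt h) • EuclideanSpace.single (2 : Fin 3) (1:ℝ) with hpdef
    have hp0 : p 0 = v 0 := by simp [hpdef, EuclideanSpace.single_apply]
    have hp1 : p 1 = v 1 := by simp [hpdef, EuclideanSpace.single_apply]
    have hp2 : p 2 = Real.sqrt h := by simp [hpdef, EuclideanSpace.single_apply]
    have hsq : (Real.sqrt h)^2 = h := Real.sq_sqrt (by linarith)
    have hps : p ∈ sphere2 := by
      apply mem_sphere2_of_sum
      rw [hp0, hp1, hp2, hsq, hh]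
      ring
    have hz34 : (3:ℝ)/4 ≤ Real.sqrt h := by
      rw [show (3:ℝ)/4 = Real.sqrt ((3/4)^2) by rw [Real.sqrt_sq (by norm_num)]]
      apply Real.sqrt_le_sqrt
      nlinarith
    have hz1 : Real.sqrt h ≤ 1 := by
      rw [show (1:ℝ) = Real.sqrt 1 by rw [Real.sqrt_one]]
      exact Real.sqrt_le_sqrt hh1
    refine ⟨p, ⟨hps, ⟨?_, ?_⟩, ⟨0, ?_, ?_⟩⟩, ?_⟩
    · rw [hp2]; push_cast; norm_num; linarith
    · rw [hp2]; push_cast; norm_num; linarith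
    · have : azimuth p = Complex.arg ((v 0 : ℂ) + (v 1 : ℂ) * Complex.I) := by
        rw [azimuth_eq, cx, hp0, hp1]
      rw [this]
      push_cast
      norm_num
      linarith
    · have : azimuth p = Complex.arg ((v 0 : ℂ) + (v 1 : ℂ) * Complex.I) := by
        rw [azimuth_eq, cx, hp0, hp1]
      rw [this]
      push_cast
      norm_num
      linarith
    · funext b
      fin_cases b
      · simpa [projPi] using hp0
      · simpa [projPi] using hp1
  -- conclude
  have hWpos : 0 < volume W := hWopen.measure_pos volume hWne
  have hle1 : volume W ≤ volume (projPi '' goodCell) := measure_mono hWsub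
  have hle2 : volume (projPi '' goodCell) ≤ (1 : ℝ≥0∞)^(2:ℝ) * sigmaM goodCell := by
    rw [← hausdorff_pi2]
    exact projPi_lipschitz.hausdorffMeasure_image_le (by norm_num) goodCell
  rw [ENNReal.one_rpow, one_mul] at hle2
  calc (0:ℝ≥0∞) < volume W := hWpos
    _ ≤ volume (projPi '' goodCell) := hle1
    _ ≤ sigmaM goodCell := hle2

lemma goodCell_muS_pos : 0 < muS goodCell := by
  rw [muS, Measure.smul_apply, smul_eq_mul]
  apply ENNReal.mul_pos
  · apply (ENNReal.inv_ne_zero).2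
    exact ENNReal.ofReal_ne_top
  · exact goodCell_pos.ne'

lemma goodCell_memB : memB goodCell := by
  refine ⟨goodCell_OPF, 1, (fun _ => 2), (fun _ => goodCell), ?_, ?_, ?_⟩
  · intro _; exact ⟨7, 0, by norm_num, by norm_num, rfl⟩
  · intro a b hab
    exact absurd (Subsingleton.elim a b) hab
  · rw [Set.iUnion_const]

-- ===== Stage: final assembly =====
lemma OPF_mono {A B : Set E3} (h : A ⊆ B) (hB : OPF B) : OPF A :=
  fun p hp q hq hne => hB p (h hp) q (h hq) hne

lemma memB_props {S : Set E3} (h : memB S) : MeasurableSet S ∧ S ⊆ sphere2 := by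
  obtain ⟨-, n, lev, c, hcell, -, rfl⟩ := h
  constructor
  · apply MeasurableSet.iUnion
    intro a
    obtain ⟨i, j, -, -, hcij⟩ := hcell a
    rw [hcij]
    exact measurableSet_dyadicCell _ _ _
  · apply Set.iUnion_subset
    intro a
    obtain ⟨i, j, -, -, hcij⟩ := hcell a
    rw [hcij]
    exact dyadicCell_subset_sphere _ _ _

lemma part1 (S : Set E3) (hsub : S ⊆ sphere2) (hmeas : MeasurableSet S) (hopf : OPF S)
    (ε : ℝ) (hε : 0 < ε) :
    ∃ S' : Set E3, memB S' ∧ muS S' > muS S - ENNReal.ofReal ε := by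
  rcases eq_or_ne (muS S) 0 with h0 | h0
  · exact ⟨goodCell, goodCell_memB, by rw [h0, zero_tsub]; exact goodCell_muS_pos⟩
  · set ν := muS.restrict sphere2 with hν
    haveI : IsFiniteMeasure ν := by
      constructor
      rw [hν, Measure.restrict_apply_univ]
      exact muS_sphere2_lt_top
    have hνS : ν S = muS S := by
      rw [hν, Measure.restrict_apply hmeas, Set.inter_eq_self_of_subset_left hsub]
    have haT : muS S ≠ ⊤ := by
      have : muS S ≤ muS sphere2 := measure_mono hsub
      exact (lt_of_le_of_lt this muS_sphere2_lt_top).ne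
    have haR : 0 < (muS S).toReal := ENNReal.toReal_pos h0 haT
    set δε : ℝ := min ε ((muS S).toReal / 2) with hδε
    have hδεpos : 0 < δε := lt_min hε (by linarith)
    have hδεne : ENNReal.ofReal δε ≠ 0 := by
      simp [ENNReal.ofReal_pos.2 hδεpos, (ENNReal.ofReal_pos.2 hδεpos).ne']
    obtain ⟨K, hKS, hKclosed, hKlt⟩ := hmeas.exists_isClosed_lt_add (μ := ν)
      (by rw [hνS]; exact haT) hδεne
    have hKsphere : K ⊆ sphere2 := hKS.trans hsub
    have hKbounded : Bornology.IsBounded K := by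
      apply Bornology.IsBounded.subset (Metric.isBounded_closedBall (x := (0:E3)) (r := 1))
      exact hKsphere.trans Metric.sphere_subset_closedBall
    have hKcompact : IsCompact K := Metric.isCompact_of_isClosed_isBounded hKclosed hKbounded
    obtain ⟨S', hS'memB, hKS', hS'meas, hS'sphere⟩ :=
      approx_compact K hKcompact hKsphere (OPF_mono hKS hopf)
    refine ⟨S', hS'memB, ?_⟩
    have hνK : ν K = muS K := by
      rw [hν, Measure.restrict_apply hKclosed.measurableSet,
        Set.inter_eq_self_of_subset_left hKsphere]
    have h1 : muS K ≤ muS S' := measure_mono hKS'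
    have hdle : ENNReal.ofReal δε ≤ muS S := by
      calc ENNReal.ofReal δε ≤ ENNReal.ofReal ((muS S).toReal / 2) :=
            ENNReal.ofReal_le_ofReal (min_le_right _ _)
        _ ≤ ENNReal.ofReal ((muS S).toReal) := ENNReal.ofReal_le_ofReal (by linarith)
        _ = muS S := ENNReal.ofReal_toReal haT
    have h2 : muS S - ENNReal.ofReal δε < muS K := by
      rw [ENNReal.sub_lt_iff_lt_right ENNReal.ofReal_ne_top hdle]
      calc muS S = ν S := hνS.symm
        _ < ν K + ENNReal.ofReal δε := hKlt
        _ = muS K + ENNReal.ofReal δε := by rw [hνK]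
    have h3 : muS S - ENNReal.ofReal ε ≤ muS S - ENNReal.ofReal δε :=
      tsub_le_tsub_left (ENNReal.ofReal_le_ofReal (min_le_left _ _)) _
    calc muS S - ENNReal.ofReal ε ≤ muS S - ENNReal.ofReal δε := h3
      _ < muS K := h2
      _ ≤ muS S' := h1

theorem stmt5' :
    (∀ S : Set E3, S ⊆ sphere2 → MeasurableSet S → OPF S →
      ∀ ε : ℝ, 0 < ε →
        ∃ S' : Set E3, memB S' ∧ muS S' > muS S - ENNReal.ofReal ε) ∧
    sSup {m : ℝ≥0∞ | ∃ S' : Set E3, memB S' ∧ muS S' = m}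
      = sSup {m : ℝ≥0∞ | ∃ S : Set E3, S ⊆ sphere2 ∧ MeasurableSet S ∧ OPF S ∧ muS S = m} := by
  constructor
  · exact part1
  · apply le_antisymm
    · apply sSup_le
      rintro m ⟨S', hS', rfl⟩
      obtain ⟨hmeas, hsub⟩ := memB_props hS'
      exact le_sSup ⟨S', hsub, hmeas, hS'.1, rfl⟩
    · apply sSup_le
      rintro m ⟨S, hsub, hmeas, hopf, rfl⟩
      apply ENNReal.le_of_forall_pos_le_add
      intro ε hε _
      obtain ⟨S', hS'memB, hS'gt⟩ := part1 S hsub hmeas hopf ε (by exact_mod_cast hε)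
      have hmem : muS S' ∈ {m : ℝ≥0∞ | ∃ S' : Set E3, memB S' ∧ muS S' = m} := ⟨S', hS'memB, rfl⟩
      have h1 : muS S - ENNReal.ofReal ε ≤ sSup {m : ℝ≥0∞ | ∃ S' : Set E3, memB S' ∧ muS S' = m} :=
        le_trans hS'gt.le (le_sSup hmem)
      rw [tsub_le_iff_right] at h1
      calc muS S ≤ sSup {m : ℝ≥0∞ | ∃ S' : Set E3, memB S' ∧ muS S' = m} + ENNReal.ofReal ε := h1
        _ = sSup {m : ℝ≥0∞ | ∃ S' : Set E3, memB S' ∧ muS S' = m} + ε := by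
            rw [ENNReal.ofReal_coe_nnreal]

/-- every measurable orthogonal-pair-free set can be approximated
(in measure, up to ε) by a set of ℬ; consequently the two suprema agree. -/
theorem stmt5 :
    (∀ S : Set E3, S ⊆ sphere2 → MeasurableSet S → OPF S →
      ∀ ε : ℝ, 0 < ε →
        ∃ S' : Set E3, memB S' ∧ muS S' > muS S - ENNReal.ofReal ε) ∧
    sSup {m : ℝ≥0∞ | ∃ S' : Set E3, memB S' ∧ muS S' = m}
      = sSup {m : ℝ≥0∞ | ∃ S : Set E3, S ⊆ sphere2 ∧ MeasurableSet S ∧ OPF S ∧ muS S = m} := by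
  exact stmt5'

end
end

section
/- Let M ⊆ 𝕊² be an orthogonal-pair-free set. Define G(M) = ⋃_{y∈M} G(y), M₁ = {z ∈ 𝕊² : G(z) ⊆ G(M)}, and M₂ = M₁ \ G(M). Then M ⊆ M₂ and M₂ is orthogonal-pair-free. -/
open Metric Set MeasureTheory Filter
open scoped ENNReal Topology

noncomputable section

/-- M ⊆ M₂ and M₂ is orthogonal-pair-free. -/
theorem stmt8 (M : Set E3) (hM : M ⊆ sphere2) (hOPF : OPF M) :
    M ⊆ Mtwo M ∧ OPF (Mtwo M) := by
  constructor
  · intro y hy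
    refine ⟨⟨hM hy, fun z hz => Set.mem_biUnion hy hz⟩, ?_⟩
    intro hyG
    rcases Set.mem_iUnion₂.mp hyG with ⟨z, hzM, _, hzy⟩
    by_cases h : z = y
    · subst h
      have h1 : ‖z‖ = 1 := mem_sphere_zero_iff_norm.mp (hM hzM)
      have h2 : rinner z z = 1 := by
        unfold rinner
        rw [real_inner_self_eq_norm_sq, h1]; norm_num
      exact one_ne_zero (h2.symm.trans hzy)
    · exact hOPF z hzM y hy h hzy
  · intro p hp q hq hpq hortho
    have hq2 : q ∈ polarGC p := ⟨hq.1.1, hortho⟩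
    exact hq.2 (hp.1.2 hq2)

end
end

section
/- Let M ⊆ 𝕊² be an orthogonal-pair-free set, and define G(M) = ⋃_{y∈M} G(y), M₁ = {z ∈ 𝕊² : G(z) ⊆ G(M)}, M₂ = M₁ \ G(M). Let x, y, z be three distinct points of 𝕊² such that arc(x,y) ⊆ M₂ and arc(y,z) ⊆ M₂. Then x ≠ −z and arc(x,z) ⊆ M₁. -/
open Metric Set MeasureTheory Filter
open scoped ENNReal Topology

noncomputable section

lemma rinner_comb (u a b : E3) (s t : ℝ) :
    rinner u (s • a + t • b) = s * rinner u a + t * rinner u b := by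
  rw [rinner, inner_add_right, real_inner_smul_right, real_inner_smul_right]; rfl

lemma rinner_smul (u : E3) (c : ℝ) (p : E3) : rinner u (c • p) = c * rinner u p := by
  rw [rinner, real_inner_smul_right]; rfl

lemma seg_zero_pos (u a b : E3) (hA : 0 < rinner u a) (hB : rinner u b ≤ 0) :
    ∃ p ∈ segment ℝ a b, rinner u p = 0 := by
  set A := rinner u a with hAdef
  set B := rinner u b with hBdef
  have hd : 0 < A - B := by linarith
  refine ⟨(1 - A / (A - B)) • a + (A / (A - B)) • b,
    ⟨1 - A / (A - B), A / (A - B), ?_, div_nonneg hA.le hd.le, by ring, rfl⟩, ?_⟩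
  · have : A / (A - B) ≤ 1 := (div_le_one hd).mpr (by linarith)
    linarith
  · rw [rinner_comb, ← hAdef, ← hBdef]
    field_simp
    ring

lemma seg_zero (u a b : E3) (h : rinner u a * rinner u b ≤ 0) :
    ∃ p ∈ segment ℝ a b, rinner u p = 0 := by
  rcases lt_trichotomy (rinner u a) 0 with hA | hA | hA
  · have hB : 0 ≤ rinner u b := by nlinarith
    have hA' : 0 < rinner (-u) a := by
      simpa [rinner, inner_neg_left] using hA
    have hB' : rinner (-u) b ≤ 0 := by
      simpa [rinner, inner_neg_left] using hB
    obtain ⟨p, hp, hp0⟩ := seg_zero_pos (-u) a b hA' hB'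
    refine ⟨p, hp, ?_⟩
    have : -rinner u p = 0 := by simpa [rinner, inner_neg_left] using hp0
    linarith
  · exact ⟨a, left_mem_segment ℝ a b, hA⟩
  · have hB : rinner u b ≤ 0 := by nlinarith
    exact seg_zero_pos u a b hA hB

/-- zero of rinner u on the broken path, landing in arc x y ∪ arc y z. -/
lemma broken_zero (x y z u : E3) (hsign : rinner u x * rinner u z ≤ 0) :
    ∃ q, (q ∈ arc x y ∨ q ∈ arc y z) ∧ rinner u q = 0 := by
  have hcase : rinner u x * rinner u y ≤ 0 ∨ rinner u y * rinner u z ≤ 0 := by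
    by_contra hc
    push_neg at hc
    nlinarith [hc.1, hc.2, sq_nonneg (rinner u y)]
  rcases hcase with hc | hc
  · obtain ⟨p, hp, hp0⟩ := seg_zero u x y hc
    exact ⟨‖p‖⁻¹ • p, Or.inl ⟨p, hp, rfl⟩, by rw [rinner_smul, hp0, mul_zero]⟩
  · obtain ⟨p, hp, hp0⟩ := seg_zero u y z hc
    exact ⟨‖p‖⁻¹ • p, Or.inr ⟨p, hp, rfl⟩, by rw [rinner_smul, hp0, mul_zero]⟩

lemma rinner_smul_left (c : ℝ) (p q : E3) : rinner (c • p) q = c * rinner p q := by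
  rw [rinner, real_inner_smul_left]; rfl

lemma comb_sign {a b A B : ℝ} (ha : 0 ≤ a) (hb : 0 ≤ b) (hab : a + b = 1)
    (h : a * A + b * B = 0) : A * B ≤ 0 := by
  rcases lt_trichotomy A 0 with hA | hA | hA
  · have hB : 0 ≤ B := by
      by_contra hB
      push_neg at hB
      have h1 : a * A ≤ 0 := by nlinarith [mul_nonneg ha (neg_nonneg.mpr hA.le)]
      have h2 : b * B ≤ 0 := by nlinarith [mul_nonneg hb (neg_nonneg.mpr hB.le)]
      have h3 : a * A = 0 := by linarith
      have h4 : b * B = 0 := by linarith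
      have ha0 : a = 0 := by
        rcases mul_eq_zero.mp h3 with h' | h'
        · exact h'
        · exact absurd h' hA.ne
      have hb0 : b = 0 := by
        rcases mul_eq_zero.mp h4 with h' | h'
        · exact h'
        · exact absurd h' hB.ne
      linarith
    nlinarith [mul_nonneg (neg_nonneg.mpr hA.le) hB]
  · simp [hA]
  · have hB : B ≤ 0 := by
      by_contra hB
      push_neg at hB
      have h1 : 0 ≤ a * A := mul_nonneg ha hA.le
      have h2 : 0 ≤ b * B := mul_nonneg hb hB.le
      have h3 : a * A = 0 := by linarith
      have h4 : b * B = 0 := by linarith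
      have ha0 : a = 0 := by
        rcases mul_eq_zero.mp h3 with h' | h'
        · exact h'
        · exact absurd h' hA.ne'
      have hb0 : b = 0 := by
        rcases mul_eq_zero.mp h4 with h' | h'
        · exact h'
        · exact absurd h' hB.ne'
      linarith
    nlinarith [mul_nonneg hA.le (neg_nonneg.mpr hB)]

lemma norm_one_of_sphere2 {p : E3} (hp : p ∈ sphere2) : ‖p‖ = 1 := by
  simpa [sphere2] using hp

lemma mem_arc_left {x : E3} (hx : ‖x‖ = 1) (y : E3) : x ∈ arc x y :=
  ⟨x, left_mem_segment ℝ x y, by dsimp only; rw [hx, inv_one, one_smul]⟩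


/-- if arc(x,y) ⊆ M₂ and arc(y,z) ⊆ M₂ then x ≠ -z and arc(x,z) ⊆ M₁. -/
theorem stmt9 (M : Set E3) (hM : M ⊆ sphere2) (hOPF : OPF M)
    (x y z : E3) (hx : x ∈ sphere2) (hy : y ∈ sphere2) (hz : z ∈ sphere2)
    (hxy : x ≠ y) (hyz : y ≠ z) (hxz : x ≠ z)
    (h1 : arc x y ⊆ Mtwo M) (h2 : arc y z ⊆ Mtwo M) :
    x ≠ -z ∧ arc x z ⊆ Mone M := by
  have hnx : ‖x‖ = 1 := norm_one_of_sphere2 hx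
  have hnz : ‖z‖ = 1 := norm_one_of_sphere2 hz
  have hM2 : ∀ q, (q ∈ arc x y ∨ q ∈ arc y z) → q ∈ Mtwo M := by
    rintro q (hq | hq)
    · exact h1 hq
    · exact h2 hq
  have key : ∀ u ∈ sphere2, rinner u x * rinner u z ≤ 0 →
      ∃ q ∈ Mtwo M, rinner q u = 0 := by
    intro u hu hsign
    obtain ⟨q, hq, hq0⟩ := broken_zero x y z u hsign
    exact ⟨q, hM2 q hq, by rw [rinner, real_inner_comm]; exact hq0⟩
  have hxz' : x ≠ -z := by
    intro hc
    have hzz : z = -x := by rw [hc]; simp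
    have hsign : rinner x x * rinner x z ≤ 0 := by
      have hh1 : rinner x x = 1 := by
        rw [rinner, real_inner_self_eq_norm_sq, hnx]; norm_num
      have hh2 : rinner x z = -1 := by
        rw [hzz, rinner, inner_neg_right, real_inner_self_eq_norm_sq, hnx]; norm_num
      rw [hh1, hh2]; norm_num
    obtain ⟨q, hqM2, hq0⟩ := key x hx hsign
    have hxM2 : x ∈ Mtwo M := h1 (mem_arc_left hnx y)
    exact hxM2.2 ((hqM2.1).2 ⟨hx, hq0⟩)
  refine ⟨hxz', ?_⟩
  rintro w ⟨v, hv, rfl⟩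
  obtain ⟨a, b, ha, hb, hab, hvdef⟩ := hv
  have hvne : v ≠ 0 := by
    intro hc
    have hax : a • x = -(b • z) := by
      rw [← hvdef] at hc
      rw [eq_neg_iff_add_eq_zero]
      exact hc
    have hna : a = b := by
      have hn := congrArg norm hax
      rw [norm_smul, norm_neg, norm_smul, hnx, hnz, Real.norm_eq_abs,
        Real.norm_eq_abs, abs_of_nonneg ha, abs_of_nonneg hb] at hn
      simpa using hn
    have ha2 : a = 1 / 2 := by linarith
    have hane : a ≠ 0 := by rw [ha2]; norm_num
    apply hxz'
    have hxx : x = a⁻¹ • (a • x) := by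
      rw [smul_smul, inv_mul_cancel₀ hane, one_smul]
    rw [hax, ← hna, smul_neg, smul_smul, inv_mul_cancel₀ hane, one_smul] at hxx
    exact hxx
  have hnv : ‖v‖ ≠ 0 := norm_ne_zero_iff.mpr hvne
  have hw_sph : ‖v‖⁻¹ • v ∈ sphere2 := by
    simp only [sphere2, mem_sphere_zero_iff_norm, norm_smul, norm_inv, norm_norm]
    field_simp
  refine ⟨hw_sph, ?_⟩
  rintro u ⟨hu, hu0⟩
  dsimp only at hu0
  rw [rinner_smul_left] at hu0
  have huv : rinner v u = 0 := by
    rcases mul_eq_zero.mp hu0 with h | h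
    · exact absurd h (inv_ne_zero hnv)
    · exact h
  have hcomb : a * rinner u x + b * rinner u z = 0 := by
    have huv' : rinner u v = 0 := by rw [rinner, real_inner_comm]; exact huv
    rw [← hvdef, rinner_comb] at huv'
    exact huv'
  have hsign : rinner u x * rinner u z ≤ 0 := comb_sign ha hb hab hcomb
  obtain ⟨q, hqM2, hq0⟩ := key u hu hsign
  exact (hqM2.1).2 ⟨hu, hq0⟩

end
end

section
/- (Triangle lemma) Let M ⊆ 𝕊² be an orthogonal-pair-free set, and define G(M) = ⋃_{y∈M} G(y), M₁ = {z ∈ 𝕊² : G(z) ⊆ G(M)}, M₂ = M₁ \ G(M). Let x, y, z be three distinct points of M₂ such that arc(x,y) ⊆ M₂ and arc(y,z) ⊆ M₂. Then (1) arc(x,z) ⊆ M₂, and (2) d(x,y) < π/2, d(y,z) < π/2, and d(x,z) < π/2. -/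
open Metric Set MeasureTheory Filter
open scoped ENNReal Topology

noncomputable section

/-- Auxiliary lemmas for stmt10. -/
lemma rinner_comm (p q : E3) : rinner p q = rinner q p := by
  unfold rinner; exact real_inner_comm q p

lemma rinner_smul_right (p : E3) (c : ℝ) (u : E3) : rinner p (c • u) = c * rinner p u :=
  real_inner_smul_right p u c

lemma rinner_combo (p a b : E3) (s t : ℝ) :
    rinner p (s • a + t • b) = s * rinner p a + t * rinner p b := by
  simp only [rinner, inner_add_right, real_inner_smul_right]

lemma mem_arc_left_s10 {a : E3} (b : E3) (ha : ‖a‖ = 1) : a ∈ arc a b :=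
  ⟨a, left_mem_segment ℝ a b, by simp [ha]⟩

lemma mem_arc_right (a : E3) {b : E3} (hb : ‖b‖ = 1) : b ∈ arc a b :=
  ⟨b, right_mem_segment ℝ a b, by simp [hb]⟩

/-- IVT on an arc, one-sided version. -/
lemma arc_ivt' {p a b : E3} (hA : rinner p a < 0) (hB : 0 < rinner p b) :
    ∃ q ∈ arc a b, rinner p q = 0 := by
  set A := rinner p a with hAdef
  set B := rinner p b with hBdef
  have hD : A - B < 0 := by linarith
  set t : ℝ := A / (A - B) with htdef
  have ht0 : 0 ≤ t := div_nonneg_iff.2 (Or.inr ⟨hA.le, hD.le⟩)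
  have ht1 : t ≤ 1 := by
    rw [htdef, div_le_one_iff]
    exact Or.inr (Or.inr ⟨hD, by linarith⟩)
  set u : E3 := (1 - t) • a + t • b with hudef
  have hseg : u ∈ segment ℝ a b := ⟨1 - t, t, by linarith, ht0, by ring, rfl⟩
  refine ⟨‖u‖⁻¹ • u, ⟨u, hseg, rfl⟩, ?_⟩
  have hDne : A - B ≠ 0 := hD.ne
  have hlin : (1 - t) * A + t * B = 0 := by
    rw [htdef]
    field_simp
    ring
  rw [rinner_smul_right, hudef, rinner_combo, ← hAdef, ← hBdef, hlin, mul_zero]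

/-- IVT on an arc. -/
lemma arc_ivt {p a b : E3} (h : rinner p a * rinner p b < 0) :
    ∃ q ∈ arc a b, rinner p q = 0 := by
  rcases lt_trichotomy (rinner p a) 0 with hA | hA | hA
  · have hB : 0 < rinner p b := by
      rcases lt_trichotomy (rinner p b) 0 with hB | hB | hB
      · nlinarith
      · nlinarith
      · exact hB
    exact arc_ivt' hA hB
  · rw [hA, zero_mul] at h; exact absurd h (lt_irrefl 0)
  · have hB : rinner p b < 0 := by nlinarith
    have hA' : rinner (-p) a < 0 := by
      rw [show rinner (-p) a = -rinner p a by simp [rinner]]; linarith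
    have hB' : 0 < rinner (-p) b := by
      rw [show rinner (-p) b = -rinner p b by simp [rinner]]; linarith
    obtain ⟨q, hq, hq0⟩ := arc_ivt' hA' hB'
    refine ⟨q, hq, ?_⟩
    have : rinner (-p) q = -rinner p q := by simp [rinner]
    rw [this] at hq0; linarith

lemma mtwo_subset_sphere {M : Set E3} {q : E3} (hq : q ∈ Mtwo M) : q ∈ sphere2 := hq.1.1

/-- No point of an arc inside `Mtwo M` is orthogonal to `p` if `polarGC p ⊆ GM M`. -/
lemma arc_no_zero {M : Set E3} {p a b : E3} (hp : polarGC p ⊆ GM M)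
    (harc : arc a b ⊆ Mtwo M) : ∀ q ∈ arc a b, rinner p q ≠ 0 := by
  intro q hq h0
  have hq2 := harc hq
  exact hq2.2 (hp ⟨mtwo_subset_sphere hq2, h0⟩)

/-- Sign constancy along an arc in `Mtwo M`. -/
lemma arc_sign {M : Set E3} {p a b : E3} (hp : polarGC p ⊆ GM M)
    (ha : ‖a‖ = 1) (hb : ‖b‖ = 1) (harc : arc a b ⊆ Mtwo M) :
    0 < rinner p a * rinner p b := by
  have key := arc_no_zero hp harc
  have hA : rinner p a ≠ 0 := key a (mem_arc_left_s10 b ha)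
  have hB : rinner p b ≠ 0 := key b (mem_arc_right a hb)
  rcases lt_trichotomy (rinner p a * rinner p b) 0 with h | h | h
  · obtain ⟨q, hq, hq0⟩ := arc_ivt h
    exact absurd hq0 (key q hq)
  · exact absurd h (mul_ne_zero hA hB)
  · exact h

/-- Sign constancy along the two-arc chain x → y → z. -/
lemma chain_sign {M : Set E3} {p x y z : E3} (hp : polarGC p ⊆ GM M)
    (hx : ‖x‖ = 1) (hy : ‖y‖ = 1) (hz : ‖z‖ = 1)
    (h1 : arc x y ⊆ Mtwo M) (h2 : arc y z ⊆ Mtwo M) :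
    0 < rinner p x * rinner p z := by
  have s1 := arc_sign hp hx hy h1
  have s2 := arc_sign hp hy hz h2
  nlinarith [sq_nonneg (rinner p y), mul_pos s1 s2]

lemma arccos_lt_pi_div_two' {t : ℝ} (ht : 0 < t) : Real.arccos t < Real.pi / 2 := by
  rw [Real.arccos_eq_pi_div_two_sub_arcsin]
  linarith [Real.arcsin_pos.2 ht]


/-- Triangle lemma. -/
theorem stmt10 (M : Set E3) (hM : M ⊆ sphere2) (hOPF : OPF M)
    (x y z : E3) (hx : x ∈ Mtwo M) (hy : y ∈ Mtwo M) (hz : z ∈ Mtwo M)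
    (hxy : x ≠ y) (hyz : y ≠ z) (hxz : x ≠ z)
    (h1 : arc x y ⊆ Mtwo M) (h2 : arc y z ⊆ Mtwo M) :
    arc x z ⊆ Mtwo M ∧
    gdist x y < Real.pi / 2 ∧ gdist y z < Real.pi / 2 ∧ gdist x z < Real.pi / 2 := by
  have hxS : ‖x‖ = 1 := mem_sphere_zero_iff_norm.1 hx.1.1
  have hyS : ‖y‖ = 1 := mem_sphere_zero_iff_norm.1 hy.1.1
  have hzS : ‖z‖ = 1 := mem_sphere_zero_iff_norm.1 hz.1.1
  have hx1 : polarGC x ⊆ GM M := hx.1.2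
  have hy1 : polarGC y ⊆ GM M := hy.1.2
  have hz1 : polarGC z ⊆ GM M := hz.1.2
  have hxx : rinner x x = 1 := by
    have := real_inner_self_eq_norm_mul_norm x
    rw [hxS] at this; simpa [rinner] using this
  have hyy : rinner y y = 1 := by
    have := real_inner_self_eq_norm_mul_norm y
    rw [hyS] at this; simpa [rinner] using this
  -- positivity of inner products
  have c1 : 0 < rinner x y := by
    have := arc_sign hx1 hxS hyS h1
    rwa [hxx, one_mul] at this
  have c2 : 0 < rinner y z := by
    have := arc_sign hy1 hyS hzS h2
    rwa [hyy, one_mul] at this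
  have c3 : 0 < rinner x z := by
    have := chain_sign hx1 hxS hyS hzS h1 h2
    rwa [hxx, one_mul] at this
  refine ⟨?_, arccos_lt_pi_div_two' c1, arccos_lt_pi_div_two' c2, arccos_lt_pi_div_two' c3⟩
  -- arc x z ⊆ Mtwo M
  rintro w ⟨u, ⟨α, γ, hα, hγ, hsum, hu⟩, rfl⟩
  -- u ≠ 0
  have hxu : 0 < rinner x u := by
    rw [← hu, rinner_combo, hxx]
    rcases hγ.eq_or_lt with h | h
    · rw [← h] at hsum ⊢; simp at hsum ⊢; linarith
    · nlinarith [mul_pos h c3]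
  have hune : u ≠ 0 := by
    intro h0
    rw [h0] at hxu
    simp [rinner] at hxu
  have hn : ‖u‖ ≠ 0 := norm_ne_zero_iff.2 hune
  have hwS : ‖u‖⁻¹ • u ∈ sphere2 := by
    rw [sphere2, mem_sphere_zero_iff_norm, norm_smul, norm_inv, norm_norm,
      inv_mul_cancel₀ hn]
  -- expansion of inner products with w
  have hexp : ∀ p : E3, rinner p (‖u‖⁻¹ • u) = ‖u‖⁻¹ * (α * rinner p x + γ * rinner p z) := by
    intro p
    rw [rinner_smul_right, ← hu, rinner_combo]
  have hker : ∀ p : E3, rinner p (‖u‖⁻¹ • u) = 0 → α * rinner p x + γ * rinner p z = 0 := by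
    intro p h0
    rw [hexp p] at h0
    rcases mul_eq_zero.1 h0 with h | h
    · exact absurd h (inv_ne_zero hn)
    · exact h
  constructor
  · -- w ∈ Mone M
    refine ⟨hwS, ?_⟩
    -- polarGC w ⊆ GM M
    rintro p ⟨hpS, hp0⟩
    have hp0' : rinner p (‖u‖⁻¹ • u) = 0 := by
      rw [rinner_comm]; exact hp0
    have heq := hker p hp0'
    set A := rinner p x with hAdef
    set B := rinner p y with hBdef
    set C := rinner p z with hCdef
    by_cases hA : A = 0
    · exact hx1 ⟨hpS, by rw [rinner_comm]; exact hA⟩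
    by_cases hC : C = 0
    · exact hz1 ⟨hpS, by rw [rinner_comm]; exact hC⟩
    by_cases hB : B = 0
    · exact hy1 ⟨hpS, by rw [rinner_comm]; exact hB⟩
    -- A and C have opposite signs
    have hαpos : 0 < α := by
      rcases hα.eq_or_lt with h | h
      · exfalso; rw [← h] at hsum heq; simp at hsum; rw [hsum] at heq; simp at heq
        exact hC heq
      · exact h
    have hγpos : 0 < γ := by
      rcases hγ.eq_or_lt with h | h
      · exfalso; rw [← h] at hsum heq; simp at hsum; rw [hsum] at heq; simp at heq
        exact hA heq
      · exact h
    have hAC : A * C < 0 := by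
      have h5 : α * (A * C) = -(γ * (C * C)) := by linear_combination C * heq
      nlinarith [mul_pos hγpos (mul_self_pos.2 hC), hαpos]
    -- one of A*B, B*C is negative
    have hABC : A * B < 0 ∨ B * C < 0 := by
      by_contra h
      push_neg at h
      obtain ⟨hAB, hBC⟩ := h
      have h6 : 0 ≤ A * B * (B * C) := mul_nonneg hAB hBC
      have h7 : A * B * (B * C) = A * C * (B * B) := by ring
      have h8 : A * C * (B * B) < 0 := mul_neg_of_neg_of_pos hAC (mul_self_pos.2 hB)
      linarith
    rcases hABC with h | h
    · obtain ⟨q, hq, hq0⟩ := arc_ivt h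
      have hq2 := h1 hq
      exact hq2.1.2 ⟨hpS, by rw [rinner_comm]; exact hq0⟩
    · obtain ⟨q, hq, hq0⟩ := arc_ivt (by rwa [hBdef, hCdef] at h)
      have hq2 := h2 hq
      exact hq2.1.2 ⟨hpS, by rw [rinner_comm]; exact hq0⟩
  · -- w ∉ GM M
    intro hwGM
    simp only [GM, Set.mem_iUnion] at hwGM
    obtain ⟨m, hm, hmS', hm0⟩ := hwGM
    have heq := hker m hm0
    have hmGM : polarGC m ⊆ GM M := fun q hq => Set.mem_biUnion hm hq
    have hAC := chain_sign hmGM hxS hyS hzS h1 h2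
    set A := rinner m x
    set C := rinner m z
    have hαpos : 0 < α := by
      rcases hα.eq_or_lt with h | h
      · exfalso; rw [← h] at hsum heq; simp at hsum; rw [hsum] at heq; simp at heq
        rw [heq] at hAC; simp at hAC
      · exact h
    have h5 : α * (A * C) = -(γ * (C * C)) := by linear_combination C * heq
    nlinarith [mul_pos hαpos hAC, mul_nonneg hγ (mul_self_nonneg C)]
end
end

section
/- Let M ⊆ 𝕊² be an orthogonal-pair-free set, and define G(M) = ⋃_{y∈M} G(y), M₁ = {z ∈ 𝕊² : G(z) ⊆ G(M)}, M₂ = M₁ \ G(M). For x ∈ M₂, let [x] = {y ∈ M₂ : x ∼ y} denote the equivalence class of x under ∼. Then [x] is a spherically convex set and [x] ⊆ M₂. -/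
open Metric Set MeasureTheory Filter
open scoped ENNReal Topology

noncomputable section

/-! ### Auxiliary lemmas for Statement 13 -/

lemma st13_mem_sphere2_iff {x : E3} : x ∈ sphere2 ↔ ‖x‖ = 1 :=
  mem_sphere_zero_iff_norm

lemma st13_normalize_smul {c : ℝ} (hc : c ≠ 0) (hc0 : 0 ≤ c) (v : E3) :
    ‖c • v‖⁻¹ • (c • v) = ‖v‖⁻¹ • v := by
  rw [norm_smul, Real.norm_eq_abs, abs_of_nonneg hc0, smul_smul, mul_inv,
    mul_comm c⁻¹ ‖v‖⁻¹, mul_assoc, inv_mul_cancel₀ hc, mul_one]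

lemma st13_comb_ne_zero {x y : E3} (hx : ‖x‖ = 1) (hy : ‖y‖ = 1) (hxy : x ≠ -y)
    {α β : ℝ} (hα : 0 ≤ α) (hβ : 0 ≤ β) (hs : α + β ≠ 0) : α • x + β • y ≠ 0 := by
  intro h
  have hxx : α • x = β • (-y) := (eq_neg_of_add_eq_zero_left h).trans (smul_neg β y).symm
  have hn : ‖α • x‖ = ‖β • (-y)‖ := congrArg norm hxx
  rw [norm_smul, norm_smul, norm_neg, hx, hy, mul_one, mul_one, Real.norm_eq_abs,
    Real.norm_eq_abs, abs_of_nonneg hα, abs_of_nonneg hβ] at hn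
  have hα0 : α ≠ 0 := by
    intro h0
    apply hs
    rw [h0, zero_add, ← hn, h0]
  subst hn
  exact hxy (smul_right_injective E3 hα0 hxx)

lemma st13_mem_arc_left {x y : E3} (hx : ‖x‖ = 1) : x ∈ arc x y :=
  ⟨x, left_mem_segment ℝ x y, by show ‖x‖⁻¹ • x = x; rw [hx, inv_one, one_smul]⟩

lemma st13_mem_arc_right {x y : E3} (hy : ‖y‖ = 1) : y ∈ arc x y :=
  ⟨y, right_mem_segment ℝ x y, by show ‖y‖⁻¹ • y = y; rw [hy, inv_one, one_smul]⟩

lemma st13_arc_comm (x y : E3) : arc x y = arc y x := by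
  unfold arc; rw [segment_symm]

lemma st13_arc_self {x : E3} (hx : ‖x‖ = 1) : arc x x = {x} := by
  unfold arc
  rw [segment_same, Set.image_singleton, hx, inv_one, one_smul]

lemma st13_normalize_comb_mem_arc (x y : E3) {α β : ℝ} (hα : 0 ≤ α) (hβ : 0 ≤ β)
    (hs : 0 < α + β) : ‖α • x + β • y‖⁻¹ • (α • x + β • y) ∈ arc x y := by
  have h' : α + β ≠ 0 := hs.ne'
  refine ⟨(α + β)⁻¹ • (α • x + β • y),
    ⟨(α + β)⁻¹ * α, (α + β)⁻¹ * β, mul_nonneg (inv_nonneg.mpr hs.le) hα,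
      mul_nonneg (inv_nonneg.mpr hs.le) hβ, ?_, ?_⟩, ?_⟩
  · field_simp
  · rw [smul_add, smul_smul, smul_smul]
  · exact st13_normalize_smul (inv_ne_zero h') (inv_nonneg.mpr hs.le) _

lemma st13_arc_subset_smul {x y : E3} {c d : ℝ} (hc : 0 < c) (hd : 0 < d) :
    arc (c • x) (d • y) ⊆ arc x y := by
  rintro w ⟨u, ⟨a, b, ha, hb, hab, rfl⟩, rfl⟩
  have hkey : a • c • x + b • d • y = (a * c) • x + (b * d) • y := by
    rw [smul_smul, smul_smul]
  have ht : 0 < a * c + b * d := by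
    rcases ha.lt_or_eq with h | h
    · exact add_pos_of_pos_of_nonneg (mul_pos h hc) (mul_nonneg hb hd.le)
    · have hb1 : b = 1 := by linarith
      rw [← h, hb1, zero_mul, one_mul, zero_add]; exact hd
  show ‖a • c • x + b • d • y‖⁻¹ • (a • c • x + b • d • y) ∈ arc x y
  rw [hkey]
  exact st13_normalize_comb_mem_arc x y (mul_nonneg ha hc.le) (mul_nonneg hb hd.le) ht

lemma st13_arc_smul_eq {x y : E3} {c d : ℝ} (hc : 0 < c) (hd : 0 < d) :
    arc (c • x) (d • y) = arc x y := by
  refine Set.Subset.antisymm (st13_arc_subset_smul hc hd) ?_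
  have h := st13_arc_subset_smul (x := c • x) (y := d • y) (inv_pos.mpr hc) (inv_pos.mpr hd)
  rwa [smul_smul, smul_smul, inv_mul_cancel₀ hc.ne', inv_mul_cancel₀ hd.ne', one_smul,
    one_smul] at h

lemma st13_neg_mem_arc_neg {x y w : E3} (h : w ∈ arc (-x) (-y)) : -w ∈ arc x y := by
  obtain ⟨u, ⟨a, b, ha, hb, hab, rfl⟩, rfl⟩ := h
  refine ⟨a • x + b • y, ⟨a, b, ha, hb, hab, rfl⟩, ?_⟩
  have hu : a • -x + b • -y = -(a • x + b • y) := by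
    rw [smul_neg, smul_neg, neg_add]
  show ‖a • x + b • y‖⁻¹ • (a • x + b • y) = -(‖a • -x + b • -y‖⁻¹ • (a • -x + b • -y))
  rw [hu, norm_neg, smul_neg, neg_neg]

lemma st13_arc_ne_neg_left {y z : E3} (hy : ‖y‖ = 1) (hz : ‖z‖ = 1) (hyz : y ≠ -z)
    {w : E3} (hw : w ∈ arc y z) : w ≠ -y := by
  obtain ⟨u, ⟨a, b, ha, hb, hab, rfl⟩, rfl⟩ := hw
  intro heq
  replace heq : ‖a • y + b • z‖⁻¹ • (a • y + b • z) = -y := heq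
  have hu0 : a • y + b • z ≠ 0 :=
    st13_comb_ne_zero hy hz hyz ha hb (by rw [hab]; exact one_ne_zero)
  have hnu : (0:ℝ) < ‖a • y + b • z‖ := norm_pos_iff.mpr hu0
  set n : ℝ := ‖a • y + b • z‖ with hn
  have h2 : a • y + b • z = n • (-y) := by
    conv_lhs => rw [← one_smul ℝ (a • y + b • z), ← mul_inv_cancel₀ hnu.ne', ← smul_smul, heq]
  have h4 : b • z = (a • y + b • z) - a • y := by abel
  have h3 : b • z = -((a + n) • y) := by
    rw [h4, h2, smul_neg, add_smul]
    abel
  have h5 : b = a + n := by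
    have h6 := congrArg norm h3
    rw [norm_neg, norm_smul, norm_smul, hy, hz, mul_one, mul_one, Real.norm_eq_abs,
      Real.norm_eq_abs, abs_of_nonneg hb, abs_of_nonneg (by linarith)] at h6
    exact h6
  have hb0 : b ≠ 0 := by rw [h5]; exact (by linarith : (0:ℝ) < a + n).ne'
  have h7 : z = -y := by
    have h8 : b • z = b • (-y) := by rw [h3, h5, smul_neg]
    exact smul_right_injective E3 hb0 h8
  exact hyz (by rw [h7, neg_neg])

lemma st13_subarc {y z : E3} (hy : ‖y‖ = 1) (hz : ‖z‖ = 1) (hyz : y ≠ -z)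
    {w : E3} (hw : w ∈ arc y z) : arc y w ⊆ arc y z := by
  obtain ⟨u, ⟨t1, t2, ht1, ht2, hts, rfl⟩, rfl⟩ := hw
  have hu0 : t1 • y + t2 • z ≠ 0 :=
    st13_comb_ne_zero hy hz hyz ht1 ht2 (by rw [hts]; exact one_ne_zero)
  have hnu : (0:ℝ) < ‖t1 • y + t2 • z‖ := norm_pos_iff.mpr hu0
  have heq := st13_arc_smul_eq (x := y) (y := t1 • y + t2 • z) one_pos (inv_pos.mpr hnu)
  rw [one_smul] at heq
  show arc y (‖t1 • y + t2 • z‖⁻¹ • (t1 • y + t2 • z)) ⊆ arc y z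
  rw [heq]
  rintro v ⟨q, ⟨a, b, ha, hb, hab, rfl⟩, rfl⟩
  refine ⟨a • y + b • (t1 • y + t2 • z),
    ⟨a + b * t1, b * t2, add_nonneg ha (mul_nonneg hb ht1), mul_nonneg hb ht2, ?_, ?_⟩, rfl⟩
  · have h9 : a + b * t1 + b * t2 = a + b * (t1 + t2) := by ring
    rw [h9, hts, mul_one]; exact hab
  · rw [smul_add, smul_smul, smul_smul, add_smul]
    abel

lemma st13_mtwo_of_mone {M : Set E3} (hM : M ⊆ sphere2) (hOPF : OPF M) {z : E3}
    (hz : z ∈ Mone M) : z ∈ Mtwo M := by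
  refine ⟨hz, ?_⟩
  intro hGM
  rw [GM, Set.mem_iUnion₂] at hGM
  obtain ⟨m, hm, hzm⟩ := hGM
  have hmz : m ∈ polarGC z := by
    refine ⟨hM hm, ?_⟩
    have h1 : rinner m z = 0 := hzm.2
    show rinner z m = 0
    simp only [rinner] at h1 ⊢
    rw [real_inner_comm]
    exact h1
  have h2 := hz.2 hmz
  rw [GM, Set.mem_iUnion₂] at h2
  obtain ⟨m', hm', hmm'⟩ := h2
  by_cases hne : m' = m
  · subst hne
    have h3 : rinner m' m' = 1 := by
      simp only [rinner]
      rw [real_inner_self_eq_norm_mul_norm, st13_mem_sphere2_iff.mp (hM hm'), one_mul]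
    exact one_ne_zero (h3.symm.trans hmm'.2)
  · exact hOPF m' hm' m hm hne hmm'.2

lemma st13_mtwo_subset_sphere {M : Set E3} : Mtwo M ⊆ sphere2 := fun _ hz => hz.1.1

lemma st13_mtwo_neg {M : Set E3} (hM : M ⊆ sphere2) (hOPF : OPF M) {z : E3}
    (hz : z ∈ Mtwo M) : -z ∈ Mtwo M := by
  apply st13_mtwo_of_mone hM hOPF
  refine ⟨st13_mem_sphere2_iff.mpr (by rw [norm_neg]; exact st13_mem_sphere2_iff.mp hz.1.1), ?_⟩
  intro p hp
  apply hz.1.2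
  refine ⟨hp.1, ?_⟩
  have h1 : rinner (-z) p = 0 := hp.2
  show rinner z p = 0
  simp only [rinner] at h1 ⊢
  rwa [inner_neg_left, neg_eq_zero] at h1

lemma st13_crossing {x y : E3} (hx : ‖x‖ = 1) (hy : ‖y‖ = 1) (p : E3)
    (h : rinner x p * rinner y p ≤ 0) : ∃ w ∈ arc x y, rinner w p = 0 := by
  rcases eq_or_ne (rinner x p) 0 with h0 | h0
  · exact ⟨x, st13_mem_arc_left hx, h0⟩
  rcases eq_or_ne (rinner y p) 0 with h1 | h1
  · exact ⟨y, st13_mem_arc_right hy, h1⟩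
  have hsum : 0 < |rinner y p| + |rinner x p| :=
    add_pos_of_pos_of_nonneg (abs_pos.mpr h1) (abs_nonneg _)
  have hcoef : |rinner y p| * rinner x p + |rinner x p| * rinner y p = 0 := by
    rcases lt_or_gt_of_ne h0 with ha | ha
    · have hb : 0 < rinner y p := by
        rcases lt_trichotomy (rinner y p) 0 with hb | hb | hb
        · nlinarith
        · exact absurd hb h1
        · exact hb
      rw [abs_of_pos hb, abs_of_neg ha]; ring
    · have hb : rinner y p < 0 := by
        rcases lt_trichotomy (rinner y p) 0 with hb | hb | hb
        · exact hb
        · exact absurd hb h1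
        · nlinarith
      rw [abs_of_neg hb, abs_of_pos ha]; ring
  refine ⟨_, st13_normalize_comb_mem_arc x y (abs_nonneg (rinner y p))
    (abs_nonneg (rinner x p)) hsum, ?_⟩
  simp only [rinner] at hcoef ⊢
  rw [real_inner_smul_left, inner_add_left, real_inner_smul_left, real_inner_smul_left,
    hcoef, mul_zero]

lemma st13_triangle {M : Set E3} (hM : M ⊆ sphere2) (hOPF : OPF M) {a b c : E3}
    (ha : ‖a‖ = 1) (hb : ‖b‖ = 1) (hc : ‖c‖ = 1)
    (hab : arc a b ⊆ Mtwo M) (hbc : arc b c ⊆ Mtwo M)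
    (hac' : a ≠ -c) : arc a c ⊆ Mtwo M := by
  rintro w ⟨u, ⟨t1, t2, ht1, ht2, hts, rfl⟩, rfl⟩
  have hu0 : t1 • a + t2 • c ≠ 0 :=
    st13_comb_ne_zero ha hc hac' ht1 ht2 (by rw [hts]; exact one_ne_zero)
  have hnu : (0:ℝ) < ‖t1 • a + t2 • c‖ := norm_pos_iff.mpr hu0
  apply st13_mtwo_of_mone hM hOPF
  constructor
  · show ‖t1 • a + t2 • c‖⁻¹ • (t1 • a + t2 • c) ∈ sphere2
    rw [st13_mem_sphere2_iff, norm_smul, norm_inv, norm_norm, inv_mul_cancel₀ hnu.ne']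
  · intro p hp
    have hp1 : p ∈ sphere2 := hp.1
    have hp2 : rinner (‖t1 • a + t2 • c‖⁻¹ • (t1 • a + t2 • c)) p = 0 := hp.2
    have hup : (inner ℝ (t1 • a + t2 • c) p : ℝ) = 0 := by
      simp only [rinner, real_inner_smul_left] at hp2
      rcases mul_eq_zero.mp hp2 with h | h
      · exact absurd h (inv_ne_zero hnu.ne')
      · exact h
    have hlin : t1 * rinner a p + t2 * rinner c p = 0 := by
      simp only [rinner]
      rwa [inner_add_left, real_inner_smul_left, real_inner_smul_left] at hup
    have hac0 : rinner a p * rinner c p ≤ 0 := by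
      have e1 := congrArg (· * rinner a p) hlin
      have e2 := congrArg (· * rinner c p) hlin
      simp only [zero_mul, add_mul] at e1 e2
      nlinarith [mul_nonneg ht1 (mul_self_nonneg (rinner a p)),
        mul_nonneg ht2 (mul_self_nonneg (rinner c p))]
    have hsplit : rinner a p * rinner b p ≤ 0 ∨ rinner b p * rinner c p ≤ 0 := by
      by_contra hcon
      push_neg at hcon
      obtain ⟨hx1, hx2⟩ := hcon
      nlinarith [mul_pos hx1 hx2, mul_nonneg (mul_self_nonneg (rinner b p))
        (neg_nonneg.mpr hac0)]
    rcases hsplit with hs | hs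
    · obtain ⟨w', hw', hwp⟩ := st13_crossing ha hb p hs
      exact (hab hw').1.2 ⟨hp1, hwp⟩
    · obtain ⟨w', hw', hwp⟩ := st13_crossing hb hc p hs
      exact (hbc hw').1.2 ⟨hp1, hwp⟩

lemma st13_arc_unitize {u v : E3} (h : arc u v ⊆ sphere2) :
    u ≠ 0 ∧ v ≠ 0 ∧ ‖u‖⁻¹ • u ≠ -(‖v‖⁻¹ • v) ∧
      arc (‖u‖⁻¹ • u) (‖v‖⁻¹ • v) = arc u v := by
  have hmem : ∀ w ∈ arc u v, ‖w‖ = 1 := fun w hw => st13_mem_sphere2_iff.mp (h hw)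
  have hu : u ≠ 0 := by
    intro h0
    have h1 : ‖(‖u‖⁻¹ • u : E3)‖ = 1 := hmem _ ⟨u, left_mem_segment ℝ u v, rfl⟩
    rw [h0, smul_zero, norm_zero] at h1
    exact one_ne_zero h1.symm
  have hv : v ≠ 0 := by
    intro h0
    have h1 : ‖(‖v‖⁻¹ • v : E3)‖ = 1 := hmem _ ⟨v, right_mem_segment ℝ u v, rfl⟩
    rw [h0, smul_zero, norm_zero] at h1
    exact one_ne_zero h1.symm
  have hnu : (0:ℝ) < ‖u‖ := norm_pos_iff.mpr hu
  have hnv : (0:ℝ) < ‖v‖ := norm_pos_iff.mpr hv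
  have hS : ‖u‖ + ‖v‖ ≠ 0 := by positivity
  refine ⟨hu, hv, ?_, ?_⟩
  · intro hcon
    have hu2 : u = -((‖u‖ * ‖v‖⁻¹) • v) := by
      conv_lhs => rw [← one_smul ℝ u, ← mul_inv_cancel₀ hnu.ne', ← smul_smul, hcon]
      rw [smul_neg, smul_smul]
    have hq : (‖v‖ / (‖u‖ + ‖v‖)) • u + (‖u‖ / (‖u‖ + ‖v‖)) • v = 0 := by
      set nu := ‖u‖ with hnu'
      set nv := ‖v‖ with hnv'
      rw [hu2, smul_neg, smul_smul, ← neg_smul, ← add_smul]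
      have hcoefz : -(nv / (nu + nv) * (nu * nv⁻¹)) + nu / (nu + nv) = 0 := by
        field_simp
        ring
      rw [hcoefz, zero_smul]
    have hz0 : (0 : E3) ∈ arc u v := by
      refine ⟨(‖v‖ / (‖u‖ + ‖v‖)) • u + (‖u‖ / (‖u‖ + ‖v‖)) • v,
        ⟨‖v‖ / (‖u‖ + ‖v‖), ‖u‖ / (‖u‖ + ‖v‖), by positivity, by positivity, ?_, rfl⟩, ?_⟩
      · field_simp
        ring
      · show ‖(‖v‖ / (‖u‖ + ‖v‖)) • u + (‖u‖ / (‖u‖ + ‖v‖)) • v‖⁻¹ •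
            ((‖v‖ / (‖u‖ + ‖v‖)) • u + (‖u‖ / (‖u‖ + ‖v‖)) • v) = 0
        rw [hq, smul_zero]
    have h1 := hmem 0 hz0
    rw [norm_zero] at h1
    exact one_ne_zero h1.symm
  · have hud : ‖u‖ • (‖u‖⁻¹ • u) = u := by
      rw [smul_smul, mul_inv_cancel₀ hnu.ne', one_smul]
    have hvd : ‖v‖ • (‖v‖⁻¹ • v) = v := by
      rw [smul_smul, mul_inv_cancel₀ hnv.ne', one_smul]
    conv_rhs => rw [← hud, ← hvd]
    exact (st13_arc_smul_eq hnu hnv).symm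

lemma st13_chainRel_symm {A : Set E3} {x y : E3} (h : chainRel A x y) : chainRel A y x := by
  obtain ⟨m, s, h0, hm, hc⟩ := h
  refine ⟨m, fun l => s (m - l), by simpa using hm, by simpa using h0, ?_⟩
  intro l hl
  obtain ⟨j, hj⟩ : ∃ j, m - l = j + 1 := ⟨m - l - 1, by omega⟩
  have hj2 : m - (l + 1) = j := by omega
  have hjm : j < m := by omega
  show s (m - l) ≠ -s (m - (l+1)) ∧ arc (s (m - l)) (s (m - (l+1))) ⊆ A
  rw [hj, hj2]
  obtain ⟨h1, h2⟩ := hc j hjm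
  refine ⟨fun hcon => h1 (by rw [hcon, neg_neg]), ?_⟩
  rw [st13_arc_comm]
  exact h2

lemma st13_chainRel_trans {A : Set E3} {x y z : E3} (h1 : chainRel A x y)
    (h2 : chainRel A y z) : chainRel A x z := by
  obtain ⟨m1, s, hs0, hsm, hsc⟩ := h1
  obtain ⟨m2, t, ht0, htm, htc⟩ := h2
  refine ⟨m1 + m2, fun l => if l < m1 then s l else t (l - m1), ?_, ?_, ?_⟩
  · show (if 0 < m1 then s 0 else t (0 - m1)) = x
    rcases Nat.eq_zero_or_pos m1 with h | h
    · subst h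
      rw [if_neg (lt_irrefl 0)]
      rw [ht0, ← hsm, hs0]
    · rw [if_pos h]; exact hs0
  · show (if m1 + m2 < m1 then s (m1 + m2) else t (m1 + m2 - m1)) = z
    rw [if_neg (by omega), Nat.add_sub_cancel_left]
    exact htm
  · intro l hl
    rcases lt_trichotomy (l + 1) m1 with h | h | h
    · have hl1 : l < m1 := by omega
      show (if l < m1 then s l else t (l - m1)) ≠ -(if l + 1 < m1 then s (l+1) else t (l+1-m1)) ∧
        arc (if l < m1 then s l else t (l - m1)) (if l + 1 < m1 then s (l+1) else t (l+1-m1)) ⊆ A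
      rw [if_pos hl1, if_pos h]
      exact hsc l hl1
    · have hl1 : l < m1 := by omega
      show (if l < m1 then s l else t (l - m1)) ≠ -(if l + 1 < m1 then s (l+1) else t (l+1-m1)) ∧
        arc (if l < m1 then s l else t (l - m1)) (if l + 1 < m1 then s (l+1) else t (l+1-m1)) ⊆ A
      rw [if_pos hl1, if_neg (by omega : ¬ l + 1 < m1)]
      have e : l + 1 - m1 = 0 := by omega
      rw [e, ht0, ← hsm, ← h]
      exact hsc l hl1
    · have hl1 : ¬ l < m1 := by omega
      have hl2 : ¬ l + 1 < m1 := by omega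
      show (if l < m1 then s l else t (l - m1)) ≠ -(if l + 1 < m1 then s (l+1) else t (l+1-m1)) ∧
        arc (if l < m1 then s l else t (l - m1)) (if l + 1 < m1 then s (l+1) else t (l+1-m1)) ⊆ A
      rw [if_neg hl1, if_neg hl2]
      have e : l + 1 - m1 = (l - m1) + 1 := by omega
      rw [e]
      exact htc (l - m1) (by omega)

lemma st13_chainRel_snoc {A : Set E3} {x y w : E3} (h : chainRel A x y)
    (hyw : y ≠ -w) (harc : arc y w ⊆ A) : chainRel A x w := by
  obtain ⟨m, s, hs0, hsm, hsc⟩ := h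
  refine ⟨m + 1, fun l => if l < m + 1 then s l else w, ?_, ?_, ?_⟩
  · show (if 0 < m + 1 then s 0 else w) = x
    rw [if_pos (Nat.succ_pos m)]; exact hs0
  · show (if m + 1 < m + 1 then s (m+1) else w) = w
    rw [if_neg (lt_irrefl (m+1))]
  · intro l hl
    show (if l < m + 1 then s l else w) ≠ -(if l + 1 < m + 1 then s (l+1) else w) ∧
      arc (if l < m + 1 then s l else w) (if l + 1 < m + 1 then s (l+1) else w) ⊆ A
    rcases lt_or_eq_of_le (Nat.lt_succ_iff.mp hl) with h' | h'
    · rw [if_pos (by omega : l < m + 1), if_pos (by omega : l + 1 < m + 1)]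
      exact hsc l h'
    · rw [if_pos (by omega : l < m + 1), if_neg (by omega : ¬ l + 1 < m + 1), h', hsm]
      exact ⟨hyw, harc⟩

lemma st13_chain_main {M : Set E3} (hM : M ⊆ sphere2) (hOPF : OPF M) :
    ∀ m : ℕ, ∀ s : ℕ → E3, (∀ l, l ≤ m → ‖s l‖ = 1) →
      (∀ l, l < m → s l ≠ -s (l+1) ∧ arc (s l) (s (l+1)) ⊆ Mtwo M) →
      s 0 ∈ Mtwo M → s 0 ≠ -(s m) → arc (s 0) (s m) ⊆ Mtwo M := by
  intro m
  induction m using Nat.strong_induction_on with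
  | _ m IH =>
  cases m with
  | zero =>
    intro s hunit hchain h0 hne
    rw [st13_arc_self (hunit 0 le_rfl)]
    exact Set.singleton_subset_iff.mpr h0
  | succ n =>
    intro s hunit hchain h0 hne
    have hchn := hchain n (Nat.lt_succ_self n)
    by_cases h1 : s 0 = -(s n)
    · by_cases h2 : s 1 = -(s (n+1))
      · -- doubly bad case: use central symmetry of M₂
        obtain ⟨k, rfl⟩ : ∃ k, n = k + 1 := by
          cases n with
          | zero =>
            exfalso
            have h01 := hunit 0 (by omega)
            have h9 : s 0 + s 0 = 0 := by
              nth_rewrite 2 [h1]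
              simp
            have h10 : (2:ℝ) • s 0 = 0 := by rw [two_smul]; exact h9
            have hz : s 0 = 0 := (smul_eq_zero.mp h10).resolve_left two_ne_zero
            rw [hz, norm_zero] at h01
            exact one_ne_zero h01.symm
          | succ k => exact ⟨k, rfl⟩
        have h12 : s 1 ≠ -(s (k+1)) := by
          intro hcon
          apply hne
          rw [← hcon] at h1
          rw [h1, h2]
        have harc1n : arc (s 1) (s (k+1)) ⊆ Mtwo M :=
          IH k (by omega) (fun l => s (l+1))
            (fun l hl => hunit (l+1) (by omega))
            (fun l hl => hchain (l+1) (by omega))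
            ((hchain 0 (by omega)).2 (st13_mem_arc_right (hunit 1 (by omega))))
            h12
        intro w hw
        have h2' : s (k+1+1) = -(s 1) := by rw [h2, neg_neg]
        rw [h1, h2'] at hw
        have hnw := st13_neg_mem_arc_neg hw
        rw [st13_arc_comm] at hnw
        have hT := st13_mtwo_neg hM hOPF (harc1n hnw)
        rwa [neg_neg] at hT
      · -- s 1 ≠ -(s (n+1)) : reduce at the front
        have harc : arc (s 1) (s (n+1)) ⊆ Mtwo M :=
          IH n (Nat.lt_succ_self n) (fun l => s (l+1))
            (fun l hl => hunit (l+1) (by omega))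
            (fun l hl => hchain (l+1) (by omega))
            ((hchain 0 (by omega)).2 (st13_mem_arc_right (hunit 1 (by omega))))
            h2
        exact st13_triangle hM hOPF (hunit 0 (by omega)) (hunit 1 (by omega))
          (hunit (n+1) (by omega)) ((hchain 0 (by omega)).2) harc hne
    · -- s 0 ≠ -(s n) : reduce at the back
      have harc : arc (s 0) (s n) ⊆ Mtwo M :=
        IH n (Nat.lt_succ_self n) s
          (fun l hl => hunit l (by omega))
          (fun l hl => hchain l (by omega))
          h0 h1
      exact st13_triangle hM hOPF (hunit 0 (by omega)) (hunit n (by omega))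
        (hunit (n+1) (by omega)) harc hchn.2 hne

/-- every ∼-equivalence class in M₂ is spherically convex and ⊆ M₂. -/
theorem stmt13 (M : Set E3) (hM : M ⊆ sphere2) (hOPF : OPF M)
    (x : E3) (hx : x ∈ Mtwo M) :
    SphConvex {y ∈ Mtwo M | chainRel (Mtwo M) x y} ∧
    {y ∈ Mtwo M | chainRel (Mtwo M) x y} ⊆ Mtwo M := by
  constructor
  · intro y hy z hz hyz
    obtain ⟨hyT, hcxy⟩ := hy
    obtain ⟨hzT, hcxz⟩ := hz
    have hysph : ‖y‖ = 1 := st13_mem_sphere2_iff.mp (st13_mtwo_subset_sphere hyT)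
    have hzsph : ‖z‖ = 1 := st13_mem_sphere2_iff.mp (st13_mtwo_subset_sphere hzT)
    have hyzc : chainRel (Mtwo M) y z := st13_chainRel_trans (st13_chainRel_symm hcxy) hcxz
    obtain ⟨m, s, hs0, hsm, hsc⟩ := hyzc
    have hTs : Mtwo M ⊆ sphere2 := st13_mtwo_subset_sphere
    -- unitized chain facts
    have hunit : ∀ l, l ≤ m → ‖(‖s l‖⁻¹ • s l : E3)‖ = 1 := by
      intro l hl
      have hl0 : s l ≠ 0 := by
        rcases lt_or_eq_of_le hl with h | h
        · exact (st13_arc_unitize (Set.Subset.trans (hsc l h).2 hTs)).1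
        · rw [h, hsm]
          intro h0
          rw [h0, norm_zero] at hzsph
          exact one_ne_zero hzsph.symm
      rw [norm_smul, norm_inv, norm_norm, inv_mul_cancel₀ (norm_ne_zero_iff.mpr hl0)]
    have hch : ∀ l, l < m → (‖s l‖⁻¹ • s l : E3) ≠ -(‖s (l+1)‖⁻¹ • s (l+1)) ∧
        arc (‖s l‖⁻¹ • s l) (‖s (l+1)‖⁻¹ • s (l+1)) ⊆ Mtwo M := by
      intro l hl
      obtain ⟨-, -, hne', heq⟩ := st13_arc_unitize (Set.Subset.trans (hsc l hl).2 hTs)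
      refine ⟨hne', ?_⟩
      rw [heq]
      exact (hsc l hl).2
    have h0mem : (‖s 0‖⁻¹ • s 0 : E3) ∈ Mtwo M := by
      rw [hs0, hysph, inv_one, one_smul]; exact hyT
    have hne0m : (‖s 0‖⁻¹ • s 0 : E3) ≠ -(‖s m‖⁻¹ • s m) := by
      rw [hs0, hsm, hysph, hzsph, inv_one, one_smul, one_smul]; exact hyz
    have harc : arc y z ⊆ Mtwo M := by
      have hres := st13_chain_main hM hOPF m (fun l => ‖s l‖⁻¹ • s l) hunit hch h0mem hne0m
      have hres' : arc (‖s 0‖⁻¹ • s 0) (‖s m‖⁻¹ • s m) ⊆ Mtwo M := hres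
      rwa [hs0, hsm, hysph, hzsph, inv_one, one_smul, one_smul] at hres'
    intro w hw
    refine ⟨harc hw, ?_⟩
    have hwny : w ≠ -y := st13_arc_ne_neg_left hysph hzsph hyz hw
    have hsub : arc y w ⊆ arc y z := st13_subarc hysph hzsph hyz hw
    exact st13_chainRel_snoc hcxy (fun hcon => hwny (by rw [hcon, neg_neg]))
      (Set.Subset.trans hsub harc)
  · exact fun y hy => hy.1

end
end
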